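/- arXiv:1006.0505 — 3 statements merged into one kernel-verified Lean document; each statement's English description precedes it below -/
import Mathlib

section
/- As p tends to 0 through nonzero values, a_p tends to 2/π; that is, the function p ↦ a_p on (-1/2,∞) \ {0} extends continuously to p = 0 with value a_0 = 2/π. -/
open Real Set Filter Topology

/-- `a_p` for `p ∈ (-1/2, ∞)`: for `p ≠ 0` it is
`|p|·Γ((p+1)/2) / (√2·√(Γ(1/2)·Γ(p+1/2) − Γ((p+1)/2)²))`, and `a_0 := 2/π`. -/
noncomputable def aP (p : ℝ) : ℝ :=
  if p = 0 then 2 / Real.pi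
  else |p| * Real.Gamma ((p + 1) / 2) /
    (Real.sqrt 2 *
      Real.sqrt (Real.Gamma (1 / 2) * Real.Gamma (p + 1 / 2) - Real.Gamma ((p + 1) / 2) ^ 2))

lemma analyticAt_realGamma {x : ℝ} (hx : 0 < x) : AnalyticAt ℝ Real.Gamma x := by
  have h1 : AnalyticAt ℂ Complex.Gamma (x : ℂ) := by
    apply DifferentiableOn.analyticAt (s := {z : ℂ | 0 < z.re})
    · intro z hz
      refine (Complex.differentiableAt_Gamma z (fun m => ?_)).differentiableWithinAt
      intro h
      rw [h] at hz
      simp only [mem_setOf_eq, Complex.neg_re, Complex.natCast_re] at hz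
      have : (0:ℝ) ≤ m := Nat.cast_nonneg m
      linarith
    · exact (isOpen_lt continuous_const Complex.continuous_re).mem_nhds (by simpa using hx)
  have h2 : AnalyticAt ℝ (fun p : ℝ => Complex.Gamma (Complex.ofRealCLM p)) x :=
    (h1.restrictScalars).comp (Complex.ofRealCLM.analyticAt x)
  have h3 : Real.Gamma = fun p : ℝ => Complex.reCLM (Complex.Gamma (Complex.ofRealCLM p)) := by
    funext p
    simp [Complex.Gamma_ofReal]
  rw [h3]
  exact (Complex.reCLM.analyticAt _).comp h2

lemma half_ne_neg_nat : ∀ m : ℕ, (1/2 : ℝ) ≠ -m := by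
  intro m h
  have : (0:ℝ) ≤ m := Nat.cast_nonneg m
  linarith

noncomputable def Qf (p : ℝ) : ℝ :=
  Real.sqrt π * Real.Gamma (p + 1/2) / Real.Gamma ((p + 1) / 2) ^ 2

lemma hasDerivAt_Qf_zero : HasDerivAt Qf 0 0 := by
  set g' : ℝ := deriv Real.Gamma (1/2) with hg'
  have hΓ : HasDerivAt Real.Gamma g' (1/2) :=
    (Real.differentiableAt_Gamma half_ne_neg_nat).hasDerivAt
  have hin1 : HasDerivAt (fun p : ℝ => p + 1/2) 1 (0:ℝ) := (hasDerivAt_id (0:ℝ)).add_const _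
  have hin2 : HasDerivAt (fun p : ℝ => (p + 1) / 2) (1/2) (0:ℝ) := by
    simpa using (((hasDerivAt_id (0:ℝ)).add_const 1).div_const 2)
  have hΓ1 : HasDerivAt Real.Gamma g' ((0:ℝ) + 1/2) := by rw [zero_add]; exact hΓ
  have hΓ2 : HasDerivAt Real.Gamma g' (((0:ℝ) + 1) / 2) := by norm_num; exact hΓ
  have hc1 : HasDerivAt (fun p : ℝ => Real.Gamma (p + 1/2)) (g' * 1) 0 := by exact hΓ1.comp 0 hin1
  have hc2 : HasDerivAt (fun p : ℝ => Real.Gamma ((p + 1) / 2)) (g' * (1/2)) 0 := by exact hΓ2.comp 0 hin2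
  have hN : HasDerivAt (fun p : ℝ => Real.sqrt π * Real.Gamma (p + 1/2)) (Real.sqrt π * (g' * 1)) 0 :=
    hc1.const_mul _
  have hV : HasDerivAt (fun p : ℝ => Real.Gamma ((p + 1) / 2) ^ 2)
      (2 * Real.Gamma (((0:ℝ) + 1) / 2) ^ 1 * (g' * (1/2))) 0 := hc2.pow 2
  have hVne : Real.Gamma (((0:ℝ) + 1) / 2) ^ 2 ≠ 0 :=
    pow_ne_zero _ (Real.Gamma_pos_of_pos (by norm_num)).ne'
  have := hN.div hV hVne
  refine this.congr_deriv ?_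
  have h12 : (((0:ℝ) + 1) / 2) = 1/2 := by norm_num
  rw [h12, zero_add, Real.Gamma_one_half_eq]
  ring

lemma analyticAt_Qf {p : ℝ} (hp : -(1/2) < p) : AnalyticAt ℝ Qf p := by
  have h1 : AnalyticAt ℝ (fun p : ℝ => Real.Gamma (p + 1/2)) p :=
    (analyticAt_realGamma (by linarith)).comp (analyticAt_id.add analyticAt_const)
  have h2 : AnalyticAt ℝ (fun p : ℝ => Real.Gamma ((p + 1) / 2)) p :=
    (analyticAt_realGamma (by linarith)).comp
      ((analyticAt_id.add analyticAt_const).div analyticAt_const (by norm_num))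
  exact (analyticAt_const.mul h1).div (h2.pow 2)
    (pow_ne_zero 2 (Real.Gamma_pos_of_pos (by linarith)).ne')

lemma Qf_zero : Qf 0 = 1 := by
  have h : ((0:ℝ) + 1) / 2 = 1/2 := by norm_num
  rw [Qf, h, zero_add, Real.Gamma_one_half_eq]
  have : Real.sqrt π ≠ 0 := by positivity
  field_simp

lemma Qf_mul_Qf_neg {p : ℝ} (hp : p ∈ Ioo (-(1/2):ℝ) (1/2)) :
    Qf p * Qf (-p) = Real.cos (π * p / 2) ^ 2 / Real.cos (π * p) := by
  obtain ⟨hp1, hp2⟩ := hp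
  have hcos1 : 0 < Real.cos (π * p) := by
    apply Real.cos_pos_of_mem_Ioo
    constructor <;> nlinarith [Real.pi_pos]
  have hcos2 : 0 < Real.cos (π * p / 2) := by
    apply Real.cos_pos_of_mem_Ioo
    constructor <;> nlinarith [Real.pi_pos]
  have h1 : Real.Gamma (p + 1/2) * Real.Gamma (1/2 - p) = π / Real.cos (π * p) := by
    have := Real.Gamma_mul_Gamma_one_sub (p + 1/2)
    rw [show (1:ℝ) - (p + 1/2) = 1/2 - p by ring] at this
    rw [show π * (p + 1/2) = π * p + π/2 by ring, Real.sin_add_pi_div_two] at this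
    exact this
  have h2 : Real.Gamma ((p+1)/2) * Real.Gamma ((1-p)/2) = π / Real.cos (π * p / 2) := by
    have := Real.Gamma_mul_Gamma_one_sub ((p+1)/2)
    rw [show (1:ℝ) - (p + 1)/2 = (1-p)/2 by ring] at this
    rw [show π * ((p + 1)/2) = π * p / 2 + π/2 by ring, Real.sin_add_pi_div_two] at this
    exact this
  have hg1 : 0 < Real.Gamma ((p+1)/2) := Real.Gamma_pos_of_pos (by linarith)
  have hg2 : 0 < Real.Gamma ((1-p)/2) := Real.Gamma_pos_of_pos (by linarith)
  have e1 : Qf p * Qf (-p) =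
      (Real.sqrt π * Real.sqrt π) * (Real.Gamma (p + 1/2) * Real.Gamma (1/2 - p)) /
        ((Real.Gamma ((p+1)/2) * Real.Gamma ((1-p)/2)) ^ 2) := by
    rw [Qf, Qf, show -p + 1/2 = 1/2 - p by ring, show (-p + 1)/2 = (1-p)/2 by ring]
    ring
  rw [e1, Real.mul_self_sqrt Real.pi_pos.le, h1, h2]
  rw [div_pow]
  field_simp

noncomputable def rD (p : ℝ) : ℝ :=
  (-π * Real.cos (π * p / 2) * Real.sin (π * p / 2) * Real.cos (π * p)
    + π * Real.cos (π * p / 2) ^ 2 * Real.sin (π * p)) / Real.cos (π * p) ^ 2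

lemma hasDerivAt_pi_mul (p : ℝ) : HasDerivAt (fun q : ℝ => π * q) π p := by
  simpa using (hasDerivAt_id p).const_mul π

lemma hasDerivAt_pi_mul_half (p : ℝ) : HasDerivAt (fun q : ℝ => π * q / 2) (π / 2) p :=
  (hasDerivAt_pi_mul p).div_const 2

lemma hasDerivAt_R {p : ℝ} (hcos : Real.cos (π * p) ≠ 0) :
    HasDerivAt (fun q => Real.cos (π * q / 2) ^ 2 / Real.cos (π * q)) (rD p) p := by
  have key := (((hasDerivAt_pi_mul_half p).cos.pow 2).div ((hasDerivAt_pi_mul p).cos) hcos)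
  refine key.congr_deriv ?_
  rw [rD]
  norm_num
  ring

lemma hasDerivAt_rD_zero : HasDerivAt rD (π ^ 2 / 2) 0 := by
  have h1 : HasDerivAt (fun q : ℝ => Real.cos (π * q / 2)) (-Real.sin (π * 0 / 2) * (π/2)) 0 :=
    (hasDerivAt_pi_mul_half 0).cos
  have h2 : HasDerivAt (fun q : ℝ => Real.sin (π * q / 2)) (Real.cos (π * 0 / 2) * (π/2)) 0 :=
    (hasDerivAt_pi_mul_half 0).sin
  have h3 : HasDerivAt (fun q : ℝ => Real.cos (π * q)) (-Real.sin (π * 0) * π) 0 :=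
    (hasDerivAt_pi_mul 0).cos
  have h4 : HasDerivAt (fun q : ℝ => Real.sin (π * q)) (Real.cos (π * 0) * π) 0 :=
    (hasDerivAt_pi_mul 0).sin
  have key := (((((h1.const_mul (-π)).mul h2).mul h3).add
      (((h1.pow 2).const_mul π).mul h4)).div (h3.pow 2) (by norm_num))
  refine key.congr_deriv ?_
  norm_num
  ring

lemma tendsto_Qf_sub_one_div_sq :
    Tendsto (fun p => (Qf p - 1) / p ^ 2) (𝓝[≠] (0:ℝ)) (𝓝 (π ^ 2 / 8)) := by
  set S : Set ℝ := Ioo (-(1/2)) (1/2) with hS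
  have hSopen : IsOpen S := isOpen_Ioo
  have h0S : (0:ℝ) ∈ S := by constructor <;> norm_num
  have hSnhds : S ∈ 𝓝 (0:ℝ) := hSopen.mem_nhds h0S
  have hQan : AnalyticOnNhd ℝ Qf S := fun p hp => analyticAt_Qf hp.1
  set φ : ℝ → ℝ := deriv Qf with hφ
  have hφan : AnalyticOnNhd ℝ φ S := hQan.deriv
  have hQd : ∀ p ∈ S, HasDerivAt Qf (φ p) p := fun p hp =>
    ((hQan p hp).differentiableAt).hasDerivAt
  have hφ0 : φ 0 = 0 := hasDerivAt_Qf_zero.deriv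
  set c : ℝ := deriv φ 0 with hc
  have hφd : HasDerivAt φ c 0 := ((hφan 0 h0S).differentiableAt).hasDerivAt
  -- the combination L
  set L : ℝ → ℝ := fun p => φ p * Qf (-p) - Qf p * φ (-p) with hL
  -- L = rD on S
  have hLrD : ∀ p ∈ S, L p = rD p := by
    intro p hp
    have hpneg : -p ∈ S := by constructor <;> [linarith [hp.2]; linarith [hp.1]]
    have hQdneg : HasDerivAt (fun q : ℝ => Qf (-q)) (φ (-p) * (-1)) p :=
      (hQd (-p) hpneg).comp p (by simpa using hasDerivAt_neg p)
    have hF : HasDerivAt (fun q => Qf q * Qf (-q))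
        (φ p * Qf (-p) + Qf p * (φ (-p) * (-1))) p := (hQd p hp).mul hQdneg
    have hFeq : (fun q => Qf q * Qf (-q)) =ᶠ[𝓝 p]
        (fun q => Real.cos (π * q / 2) ^ 2 / Real.cos (π * q)) := by
      filter_upwards [hSopen.mem_nhds hp] with q hq
      exact Qf_mul_Qf_neg hq
    have hcos : Real.cos (π * p) ≠ 0 := by
      have : 0 < Real.cos (π * p) := by
        apply Real.cos_pos_of_mem_Ioo
        constructor <;> nlinarith [Real.pi_pos, hp.1, hp.2]
      exact this.ne'
    have hF' : HasDerivAt (fun q => Real.cos (π * q / 2) ^ 2 / Real.cos (π * q))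
        (φ p * Qf (-p) + Qf p * (φ (-p) * (-1))) p := by
      rwa [Filter.EventuallyEq.hasDerivAt_iff hFeq] at hF
    have := hF'.unique (hasDerivAt_R hcos)
    rw [hL]
    simp only [← this]
    ring
  -- derivative of L at 0 is 2c; also π²/2 by transfer; hence c = π²/4
  have hQ0' : HasDerivAt Qf (φ 0) 0 := hQd 0 h0S
  have hQ0neg : HasDerivAt Qf (φ 0) (-(0:ℝ)) := by rw [neg_zero]; exact hQ0'
  have hφdneg : HasDerivAt φ c (-(0:ℝ)) := by rw [neg_zero]; exact hφd
  have hQdneg0 : HasDerivAt (fun q : ℝ => Qf (-q)) (φ (-0) * (-1)) 0 := by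
    have := hQ0neg.comp (0:ℝ) (by simpa using hasDerivAt_neg (0:ℝ))
    simpa [neg_zero, Function.comp_def] using this
  have hφdneg0 : HasDerivAt (fun q : ℝ => φ (-q)) (c * (-1)) 0 :=
    hφdneg.comp (0:ℝ) (by simpa using hasDerivAt_neg (0:ℝ))
  have hL0 : HasDerivAt L (2 * c) 0 := by
    have := (hφd.mul hQdneg0).sub (hQ0'.mul hφdneg0)
    refine this.congr_deriv ?_
    simp [neg_zero, Qf_zero, hφ0]
    ring
  have hL0' : HasDerivAt L (π ^ 2 / 2) 0 := by
    have hLeq : L =ᶠ[𝓝 0] rD := by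
      filter_upwards [hSnhds] with q hq
      exact hLrD q hq
    rw [Filter.EventuallyEq.hasDerivAt_iff hLeq]
    exact hasDerivAt_rD_zero
  have hcval : c = π ^ 2 / 4 := by
    have := hL0.unique hL0'
    linarith
  -- L'Hôpital
  have hmem : ∀ᶠ p in 𝓝[≠] (0:ℝ), p ∈ S ∧ p ≠ 0 := by
    filter_upwards [nhdsWithin_le_nhds hSnhds, self_mem_nhdsWithin] with p h1 h2
    exact ⟨h1, h2⟩
  apply HasDerivAt.lhopital_zero_nhdsNE (f' := φ) (g' := fun p => 2 * p)
  · filter_upwards [hmem] with p hp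
    exact (hQd p hp.1).sub_const 1
  · filter_upwards [hmem] with p hp
    simpa using hasDerivAt_pow 2 p
  · filter_upwards [hmem] with p hp
    simpa using hp.2
  · have : Tendsto (fun p => Qf p - 1) (𝓝 0) (𝓝 0) := by
      have hcont : ContinuousAt Qf 0 := (analyticAt_Qf (by norm_num)).continuousAt
      have := hcont.tendsto
      rw [Qf_zero] at this
      simpa using this.sub_const 1
    exact this.mono_left nhdsWithin_le_nhds
  · have : Tendsto (fun p : ℝ => p ^ 2) (𝓝 0) (𝓝 0) := by
      simpa using (continuous_pow 2).tendsto (0:ℝ)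
    exact this.mono_left nhdsWithin_le_nhds
  · -- φ p / (2p) → π²/8
    have hslope : Tendsto (slope φ 0) (𝓝[≠] 0) (𝓝 c) :=
      hasDerivAt_iff_tendsto_slope.mp hφd
    have : Tendsto (fun p => slope φ 0 p / 2) (𝓝[≠] 0) (𝓝 (c / 2)) := hslope.div_const 2
    rw [hcval] at this
    refine Tendsto.congr' ?_ (by convert this using 2; ring)
    filter_upwards [self_mem_nhdsWithin] with p hp
    rw [slope_def_field, hφ0]
    field_simp
    ring

noncomputable def fR (p : ℝ) : ℝ :=
  Real.Gamma (1/2) * Real.Gamma (p + 1/2) - Real.Gamma ((p + 1) / 2) ^ 2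

lemma tendsto_fR_div_sq :
    Tendsto (fun p => fR p / p ^ 2) (𝓝[≠] (0:ℝ)) (𝓝 (π ^ 3 / 8)) := by
  have hV : Tendsto (fun p : ℝ => Real.Gamma ((p + 1) / 2) ^ 2) (𝓝 0) (𝓝 π) := by
    have hc : ContinuousAt (fun p : ℝ => Real.Gamma ((p + 1) / 2) ^ 2) 0 := by
      apply ContinuousAt.pow
      have h1 : ContinuousAt Real.Gamma (((0:ℝ) + 1) / 2) := by
        rw [show (((0:ℝ) + 1) / 2) = 1/2 by norm_num]
        exact (Real.differentiableAt_Gamma half_ne_neg_nat).continuousAt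
      have h2 : ContinuousAt (fun p : ℝ => (p + 1) / 2) 0 := by fun_prop
      exact ContinuousAt.comp (f := fun p : ℝ => (p + 1) / 2) h1 h2
    have := hc.tendsto
    rwa [show Real.Gamma (((0:ℝ) + 1) / 2) ^ 2 = π by
      rw [show (((0:ℝ) + 1) / 2) = 1/2 by norm_num, Real.Gamma_one_half_eq,
        Real.sq_sqrt Real.pi_pos.le]] at this
  have hmul := (hV.mono_left nhdsWithin_le_nhds).mul tendsto_Qf_sub_one_div_sq
  rw [show π * (π ^ 2 / 8) = π ^ 3 / 8 by ring] at hmul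
  refine Tendsto.congr' ?_ hmul
  have hmem : ∀ᶠ p in 𝓝[≠] (0:ℝ), p ∈ Ioo (-(1/2):ℝ) (1/2) := by
    apply nhdsWithin_le_nhds
    exact isOpen_Ioo.mem_nhds (by constructor <;> norm_num)
  filter_upwards [hmem] with p hp
  have hVne : Real.Gamma ((p + 1) / 2) ^ 2 ≠ 0 :=
    pow_ne_zero _ (Real.Gamma_pos_of_pos (by linarith [hp.1])).ne'
  have hkey : Real.Gamma ((p + 1) / 2) ^ 2 * (Qf p - 1) = fR p := by
    rw [Qf, fR, Real.Gamma_one_half_eq]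
    rw [mul_sub, mul_div_cancel₀ _ hVne, mul_one]
  rw [← hkey, mul_div_assoc]

lemma aP_value : Real.sqrt π / (Real.sqrt 2 * Real.sqrt (π ^ 3 / 8)) = 2 / π := by
  have h8 : Real.sqrt (π ^ 3 / 8) = π * Real.sqrt π / (2 * Real.sqrt 2) := by
    rw [show π ^ 3 / 8 = (π * Real.sqrt π / (2 * Real.sqrt 2)) ^ 2 by
      rw [div_pow, mul_pow, mul_pow, Real.sq_sqrt Real.pi_pos.le,
        Real.sq_sqrt (by norm_num : (0:ℝ) ≤ 2)]
      ring]
    exact Real.sqrt_sq (by positivity)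
  rw [h8]
  have hs2 : Real.sqrt 2 ≠ 0 := by positivity
  have hsp : Real.sqrt π ≠ 0 := by positivity
  have hp : (π : ℝ) ≠ 0 := Real.pi_pos.ne'
  field_simp

/-- As `p → 0` through nonzero values, `a_p → 2/π`; i.e. `p ↦ a_p` extends continuously
to `p = 0` with value `a_0 = 2/π`. -/
theorem stmt1 :
    Filter.Tendsto aP (nhdsWithin 0 {(0 : ℝ)}ᶜ) (nhds (2 / Real.pi)) ∧
    aP 0 = 2 / Real.pi := by
  constructor
  · -- the limit
    have hnum : Tendsto (fun p : ℝ => Real.Gamma ((p + 1) / 2)) (𝓝[≠] 0) (𝓝 (Real.sqrt π)) := by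
      have h1 : ContinuousAt Real.Gamma (((0:ℝ) + 1) / 2) := by
        rw [show (((0:ℝ) + 1) / 2) = 1/2 by norm_num]
        exact (Real.differentiableAt_Gamma half_ne_neg_nat).continuousAt
      have h2 : ContinuousAt (fun p : ℝ => (p + 1) / 2) 0 := by fun_prop
      have := (ContinuousAt.comp (f := fun p : ℝ => (p + 1) / 2) h1 h2).tendsto
      simp only [Function.comp_def] at this
      rw [show Real.Gamma (((0:ℝ) + 1) / 2) = Real.sqrt π by
        rw [show (((0:ℝ) + 1) / 2) = 1/2 by norm_num, Real.Gamma_one_half_eq]] at this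
      exact this.mono_left nhdsWithin_le_nhds
    have hden : Tendsto (fun p : ℝ => Real.sqrt 2 * Real.sqrt (fR p / p ^ 2)) (𝓝[≠] 0)
        (𝓝 (Real.sqrt 2 * Real.sqrt (π ^ 3 / 8))) :=
      tendsto_const_nhds.mul (Real.continuous_sqrt.continuousAt.tendsto.comp tendsto_fR_div_sq)
    have hdne : Real.sqrt 2 * Real.sqrt (π ^ 3 / 8) ≠ 0 := by positivity
    have hmain := hnum.div hden hdne
    rw [aP_value] at hmain
    refine Tendsto.congr' ?_ hmain
    filter_upwards [self_mem_nhdsWithin] with p hp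
    have hp0 : p ≠ 0 := hp
    have hsf : Real.sqrt (fR p) = |p| * Real.sqrt (fR p / p ^ 2) := by
      have h : p ^ 2 * (fR p / p ^ 2) = fR p := by field_simp
      conv_lhs => rw [← h]
      rw [Real.sqrt_mul (sq_nonneg p), Real.sqrt_sq_eq_abs]
    rw [aP, if_neg hp0]
    have : Real.Gamma (1 / 2) * Real.Gamma (p + 1 / 2) - Real.Gamma ((p + 1) / 2) ^ 2 = fR p := rfl
    rw [this, hsf, show Real.sqrt 2 * (|p| * Real.sqrt (fR p / p ^ 2))
      = |p| * (Real.sqrt 2 * Real.sqrt (fR p / p ^ 2)) by ring,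
      mul_div_mul_left _ _ (abs_ne_zero.mpr hp0)]
    rfl
  · simp [aP]
end

section
/- For each p ∈ (-1,∞), the ratio (λ_p(s) − λ_p(0))/s² tends to (p/2)·λ_p(0) as s tends to 0 through nonzero values. -/
open MeasureTheory ProbabilityTheory Real Set Filter Topology
open scoped NNReal ENNReal

/-- The standard Gaussian measure `N(0,1)` on `ℝ`. -/
noncomputable def γ : Measure ℝ := gaussianReal 0 1

/-- `λ_p(s) = E|Z+s|^p` for a standard normal `Z`. -/
noncomputable def lam (p s : ℝ) : ℝ := ∫ z, |z + s| ^ p ∂γ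

section aux

lemma integral_gauss_pdf (m : ℝ) (f : ℝ → ℝ) :
    ∫ x, f x ∂(gaussianReal m 1) = ∫ x, gaussianPDFReal m 1 x * f x := by
  rw [gaussianReal_of_var_ne_zero m one_ne_zero]
  have h : gaussianPDF m 1 = fun x => ((Real.toNNReal (gaussianPDFReal m 1 x) : ℝ≥0) : ℝ≥0∞) := rfl
  rw [h, integral_withDensity_eq_integral_smul ((measurable_gaussianPDFReal m 1).real_toNNReal) f]
  congr 1; funext x
  rw [NNReal.smul_def, Real.coe_toNNReal _ (gaussianPDFReal_nonneg _ _ _), smul_eq_mul]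

lemma integrable_gamma_iff (f : ℝ → ℝ) :
    Integrable f γ ↔ Integrable (fun x => gaussianPDFReal 0 1 x * f x) volume := by
  rw [γ, gaussianReal_of_var_ne_zero 0 one_ne_zero]
  have h : gaussianPDF 0 1 = fun x => ((Real.toNNReal (gaussianPDFReal 0 1 x) : ℝ≥0) : ℝ≥0∞) := rfl
  rw [h, integrable_withDensity_iff_integrable_smul ((measurable_gaussianPDFReal 0 1).real_toNNReal)]
  have h2 : (fun x => (gaussianPDFReal 0 1 x).toNNReal • f x)
      = fun x => gaussianPDFReal 0 1 x * f x := by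
    funext x
    rw [NNReal.smul_def, Real.coe_toNNReal _ (gaussianPDFReal_nonneg _ _ _), smul_eq_mul]
  rw [h2]

lemma pdf_eq (x : ℝ) : gaussianPDFReal 0 1 x = (√(2*π))⁻¹ * exp (-(1/2) * x^2) := by
  have h1 : -(x-0)^2/(2*((1:ℝ≥0):ℝ)) = -(1/2)*x^2 := by push_cast; ring
  have h2 : 2*π*((1:ℝ≥0):ℝ) = 2*π := by push_cast; ring
  rw [gaussianPDFReal, h1, h2]

lemma pdf_shift (s x : ℝ) :
    gaussianPDFReal s 1 x = gaussianPDFReal 0 1 x * exp (s*x - s^2/2) := by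
  have h1 : -(x-s)^2/(2*((1:ℝ≥0):ℝ)) = (-(x-0)^2/(2*((1:ℝ≥0):ℝ))) + (s*x - s^2/2) := by
    push_cast; ring
  rw [gaussianPDFReal, gaussianPDFReal, h1, Real.exp_add, ← mul_assoc]

lemma integrable_abs_rpow_mul_exp_neg_mul_sq {b : ℝ} (hb : 0 < b) {q : ℝ} (hq : -1 < q) :
    Integrable fun x : ℝ => |x| ^ q * exp (-b * x ^ 2) := by
  have hIoi : IntegrableOn (fun x : ℝ => |x| ^ q * exp (-b * x ^ 2)) (Ioi 0) := by
    refine (integrableOn_rpow_mul_exp_neg_mul_sq hb hq).congr_fun (fun x hx => ?_) measurableSet_Ioi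
    rw [abs_of_pos hx]
  rw [← integrableOn_univ, ← @Iio_union_Ici _ _ (0 : ℝ), integrableOn_union,
    integrableOn_Ici_iff_integrableOn_Ioi]
  refine ⟨?_, hIoi⟩
  rw [← (Measure.measurePreserving_neg (volume : Measure ℝ)).integrableOn_comp_preimage
      (Homeomorph.neg ℝ).measurableEmbedding]
  simp only [Function.comp_def, neg_preimage, neg_Iio, neg_neg, neg_zero, abs_neg, neg_sq]
  exact hIoi

lemma meas_aux (q c : ℝ) : Measurable fun x : ℝ => |x| ^ q * exp (c * |x|) := by fun_prop

lemma integrable_master_vol (q c : ℝ) (hq : -1 < q) :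
    Integrable (fun x : ℝ => |x| ^ q * exp (c * |x|) * exp (-(1/2) * x ^ 2)) volume := by
  refine Integrable.mono'
    (((integrable_abs_rpow_mul_exp_neg_mul_sq (by norm_num : (0:ℝ) < 1/4) hq).const_mul
      (exp (c^2))))
    ((meas_aux q c).mul
      ((measurable_id.pow_const 2).const_mul (-(1/2))).exp).aestronglyMeasurable
    (ae_of_all _ fun x => ?_)
  have h1 : c * |x| + -(1/2) * x^2 ≤ c^2 + -(1/4) * x^2 := by
    nlinarith [sq_nonneg (c - |x|/2), sq_abs x]
  have h2 : exp (c * |x|) * exp (-(1/2) * x^2) ≤ exp (c^2) * exp (-(1/4) * x^2) := by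
    rw [← exp_add, ← exp_add]; exact exp_le_exp.2 h1
  have h3 : (0:ℝ) ≤ |x| ^ q := rpow_nonneg (abs_nonneg x) q
  rw [Real.norm_eq_abs, abs_of_nonneg (by positivity)]
  calc |x| ^ q * exp (c * |x|) * exp (-(1/2) * x ^ 2)
      = |x| ^ q * (exp (c * |x|) * exp (-(1/2) * x^2)) := by ring
    _ ≤ |x| ^ q * (exp (c^2) * exp (-(1/4) * x^2)) := mul_le_mul_of_nonneg_left h2 h3
    _ = exp (c^2) * (|x| ^ q * exp (-(1/4) * x ^ 2)) := by ring

lemma int_gamma (q c : ℝ) (hq : -1 < q) :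
    Integrable (fun u : ℝ => |u| ^ q * exp (c * |u|)) γ := by
  rw [integrable_gamma_iff]
  have h : (fun x : ℝ => gaussianPDFReal 0 1 x * (|x|^q * exp (c*|x|)))
      = fun x => (√(2*π))⁻¹ * (|x|^q * exp (c*|x|) * exp (-(1/2)*x^2)) := by
    funext x; rw [pdf_eq]; ring
  rw [h]
  exact (integrable_master_vol q c hq).const_mul _

lemma abs_rpow_succ {q : ℝ} (hq : -1 < q) (u : ℝ) : |u| * |u| ^ q = |u| ^ (q+1) := by
  rcases eq_or_ne u 0 with rfl | hu
  · rw [abs_zero, zero_mul, zero_rpow (by linarith)]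
  · rw [rpow_add (abs_pos.2 hu), rpow_one]; ring

lemma abs_rpow_two {q : ℝ} (hq : -1 < q) (u : ℝ) : u^2 * |u| ^ q = |u| ^ (q+2) := by
  rcases eq_or_ne u 0 with rfl | hu
  · rw [abs_zero, zero_rpow (ne_of_gt (by linarith : (0:ℝ) < q+2))]; ring
  · rw [rpow_add (abs_pos.2 hu), show (2:ℝ) = ((2:ℕ):ℝ) by norm_num, rpow_natCast, sq_abs]
    ring

lemma J_eq {q : ℝ} (hq : -1 < q) :
    ∫ x in Ioi (0:ℝ), x ^ q * exp (-(1/2) * x^2)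
      = (1/2:ℝ) ^ (-(q+1)/2) * (1/2) * Real.Gamma ((q+1)/2) := by
  rw [← integral_rpow_mul_exp_neg_mul_rpow (by norm_num : (0:ℝ) < 2) hq (by norm_num : (0:ℝ) < 1/2)]
  refine setIntegral_congr_fun measurableSet_Ioi (fun x _ => ?_)
  rw [show (2:ℝ) = ((2:ℕ):ℝ) by norm_num, rpow_natCast]

lemma J_succ {q : ℝ} (hq : -1 < q) :
    ∫ x in Ioi (0:ℝ), x ^ (q+2) * exp (-(1/2) * x^2)
      = (q+1) * ∫ x in Ioi (0:ℝ), x ^ q * exp (-(1/2) * x^2) := by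
  rw [J_eq hq, J_eq (by linarith : (-1:ℝ) < q + 2)]
  have h2 : Real.Gamma ((q+2+1)/2) = ((q+1)/2) * Real.Gamma ((q+1)/2) := by
    rw [show (q+2+1)/2 = (q+1)/2 + 1 by ring,
      Real.Gamma_add_one (ne_of_gt (by linarith : (0:ℝ) < (q+1)/2))]
  rw [h2]
  have h3 : (1/2:ℝ) ^ (-(q+2+1)/2) = (1/2:ℝ) ^ (-(q+1)/2) * 2 := by
    rw [show -(q+2+1)/2 = -(q+1)/2 + (-1) by ring, rpow_add (by norm_num : (0:ℝ) < 1/2),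
      rpow_neg_one]
    norm_num
  rw [h3]; ring

/-- full-line Gaussian-weighted moment as twice the half-line integral. -/
lemma gamma_rpow_eq {q : ℝ} (hq : -1 < q) :
    ∫ u, |u| ^ q ∂γ = 2 * (√(2*π))⁻¹ * ∫ x in Ioi (0:ℝ), x ^ q * exp (-(1/2) * x^2) := by
  rw [γ, integral_gauss_pdf]
  have h : (fun x : ℝ => gaussianPDFReal 0 1 x * |x| ^ q)
      = fun x : ℝ => (√(2*π))⁻¹ * (|x| ^ q * exp (-(1/2) * |x|^2)) := by
    funext x; rw [pdf_eq, sq_abs]; ring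
  rw [h, integral_comp_abs (f := fun t : ℝ => (√(2*π))⁻¹ * (t ^ q * exp (-(1/2) * t^2)))]
  rw [integral_const_mul]
  ring

lemma gamma_moment {q : ℝ} (hq : -1 < q) :
    ∫ u, u^2 * |u| ^ q ∂γ = (q+1) * ∫ u, |u| ^ q ∂γ := by
  have h : (fun u : ℝ => u^2 * |u| ^ q) = fun u : ℝ => |u| ^ (q+2) := by
    funext u; exact abs_rpow_two hq u
  rw [h, gamma_rpow_eq (by linarith : (-1:ℝ) < q + 2), gamma_rpow_eq hq, J_succ hq]
  ring

lemma gamma_odd {q : ℝ} (hq : -1 < q) : ∫ u, u * |u| ^ q ∂γ = 0 := by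
  rw [γ, integral_gauss_pdf]
  have h : ∀ x : ℝ, gaussianPDFReal 0 1 (-x) * ((-x) * |(-x)| ^ q)
      = -(gaussianPDFReal 0 1 x * (x * |x| ^ q)) := by
    intro x
    rw [pdf_eq, pdf_eq, abs_neg, neg_sq]
    ring
  have h2 : ∫ x : ℝ, gaussianPDFReal 0 1 x * (x * |x| ^ q)
      = ∫ x : ℝ, gaussianPDFReal 0 1 (-x) * ((-x) * |(-x)| ^ q) := by
    exact (integral_neg_eq_self _ _).symm
  have h3 : ∫ x : ℝ, gaussianPDFReal 0 1 (-x) * ((-x) * |(-x)| ^ q)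
      = - ∫ x : ℝ, gaussianPDFReal 0 1 x * (x * |x| ^ q) := by
    simp_rw [h]
    exact integral_neg _
  have := h2.trans h3
  linarith

end aux

lemma expE_tendsto :
    Tendsto (fun x : ℝ => (exp x - 1 - x)/x^2) (𝓝[≠] (0:ℝ)) (𝓝 (1/2)) := by
  have key : ∀ x : ℝ, x ≠ 0 → |x| ≤ 1 → |(exp x - 1 - x)/x^2 - 1/2| ≤ |x| := by
    intro x hx h1
    have hb := Real.exp_bound h1 (by norm_num : 0 < 3)
    have hsum : (∑ m ∈ Finset.range 3, x^m/(m.factorial : ℝ)) = 1 + x + x^2/2 := by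
      rw [Finset.sum_range_succ, Finset.sum_range_succ, Finset.sum_range_one]
      norm_num [Nat.factorial]
    rw [hsum] at hb
    have hc : ((Nat.succ 3 : ℕ) : ℝ) / (((Nat.factorial 3 : ℕ) : ℝ) * ((3:ℕ):ℝ)) = 2/9 := by
      norm_num [Nat.factorial]
    rw [hc] at hb
    have hx2 : (0:ℝ) < x^2 := by positivity
    have heq : (exp x - 1 - x)/x^2 - 1/2 = (exp x - (1+x+x^2/2))/x^2 := by
      field_simp; ring
    rw [heq, abs_div, abs_of_nonneg (sq_nonneg x), div_le_iff₀ hx2]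
    have h3 : |x| ^ 3 = |x| * x^2 := by
      rw [pow_succ, sq_abs]; ring
    nlinarith [abs_nonneg x, mul_nonneg (abs_nonneg x) (sq_nonneg x)]
  have hev : ∀ᶠ x : ℝ in 𝓝[≠](0:ℝ), |x| ≤ 1 := by
    have h : ∀ᶠ x : ℝ in 𝓝 (0:ℝ), |x| ≤ 1 := by
      have hb : Metric.ball (0:ℝ) 1 ∈ 𝓝 (0:ℝ) := Metric.ball_mem_nhds 0 one_pos
      filter_upwards [hb] with x hx
      rw [Metric.mem_ball, Real.dist_eq, sub_zero] at hx
      exact hx.le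
    exact h.filter_mono nhdsWithin_le_nhds
  have h0 : Tendsto (fun x : ℝ => (exp x - 1 - x)/x^2 - 1/2) (𝓝[≠](0:ℝ)) (𝓝 0) := by
    apply squeeze_zero_norm' (a := fun x : ℝ => |x|)
    · filter_upwards [self_mem_nhdsWithin, hev] with x hx h1
      rw [Real.norm_eq_abs]
      exact key x hx h1
    · exact (continuous_abs.tendsto' 0 0 abs_zero).mono_left nhdsWithin_le_nhds
  have h1 := h0.add_const (1/2 : ℝ)
  simpa using h1

lemma key_bound {s : ℝ} (hs : s ≠ 0) (hs1 : |s| ≤ 1) (u : ℝ) :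
    |(exp (s*u - s^2/2) - 1 - s*u)/s^2| ≤ 20*(u^2+1)*exp |u| := by
  have hs2 : (0:ℝ) < s^2 := by positivity
  set x := s*u - s^2/2 with hxdef
  have hxb : |x| ≤ |s| * (|u| + 1/2) := by
    calc |x| ≤ |s*u| + |s^2/2| := abs_sub _ _
      _ = |s| * |u| + s^2/2 := by
          rw [abs_mul, abs_of_nonneg (by positivity : (0:ℝ) ≤ s^2/2)]
      _ ≤ |s| * |u| + |s| * (1/2) := by nlinarith [abs_nonneg s, sq_abs s]
      _ = |s| * (|u| + 1/2) := by ring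
  have hxu : |x| ≤ |u| + 1/2 := by nlinarith [abs_nonneg u, abs_nonneg x]
  have hE1 : (1:ℝ) ≤ exp |u| := Real.one_le_exp (abs_nonneg u)
  have hsq : (|u| + 1/2)^2 ≤ 2*(u^2+1) := by nlinarith [sq_nonneg (|u| - 1), sq_abs u]
  have main : |exp x - 1 - x| / s^2 ≤ 18*(u^2+1)*exp |u| := by
    rcases le_or_gt |x| 1 with h1 | h1
    · have hle := Real.abs_exp_sub_one_sub_id_le h1
      rw [div_le_iff₀ hs2]
      have hx2 : x^2 ≤ s^2 * (|u|+1/2)^2 := by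
        have h05 : (0:ℝ) ≤ |u| + 1/2 := by positivity
        have hA := mul_le_mul hxb hxb (abs_nonneg x) (mul_nonneg (abs_nonneg s) h05)
        calc x^2 = |x| * |x| := by rw [abs_mul_abs_self, pow_two]
          _ ≤ (|s| * (|u|+1/2)) * (|s| * (|u|+1/2)) := hA
          _ = (|s| * |s|) * ((|u|+1/2)^2) := by ring
          _ = s^2 * (|u|+1/2)^2 := by rw [abs_mul_abs_self, ← pow_two]
      calc |exp x - 1 - x| ≤ x^2 := hle
        _ ≤ s^2 * (|u|+1/2)^2 := hx2
        _ ≤ s^2 * (2*(u^2+1)) := mul_le_mul_of_nonneg_left hsq hs2.le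
        _ ≤ s^2 * (18*(u^2+1)*exp |u|) := by
            refine mul_le_mul_of_nonneg_left ?_ hs2.le
            nlinarith [mul_nonneg (by positivity : (0:ℝ) ≤ u^2+1)
              (by linarith : (0:ℝ) ≤ 18*exp |u| - 2)]
        _ = 18*(u^2+1)*exp |u| * s^2 := by ring
    · have hinv : 1 ≤ s^2 * (|u|+1/2)^2 := by
        have h2 : 1 ≤ |s| * (|u|+1/2) := h1.le.trans hxb
        nlinarith [abs_nonneg s, abs_nonneg u, sq_abs s]
      have hub : |exp x - 1 - x| ≤ 3 * exp (|u| + 1/2) := by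
        have e1 : exp x ≤ exp |x| := exp_le_exp.2 (le_abs_self x)
        have e2 : (1:ℝ) ≤ exp |x| := Real.one_le_exp (abs_nonneg x)
        have e3 : |x| ≤ exp |x| := by linarith [Real.add_one_le_exp |x|]
        have e4 : exp |x| ≤ exp (|u|+1/2) := exp_le_exp.2 hxu
        calc |exp x - 1 - x| ≤ |exp x - 1| + |x| := abs_sub _ _
          _ ≤ (|exp x| + 1) + |x| := by
              have h5 := abs_sub (exp x) (1:ℝ)
              simp only [abs_one] at h5
              linarith
          _ ≤ 3 * exp |x| := by
              rw [abs_of_pos (exp_pos x)]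
              linarith
          _ ≤ 3 * exp (|u|+1/2) := by linarith
      have hexp : exp (|u| + 1/2) ≤ 3 * exp |u| := by
        rw [Real.exp_add]
        have h6 : exp (1/2:ℝ) ≤ 3 := by
          have h := Real.exp_one_lt_d9
          have h2 : exp (1/2:ℝ) ≤ exp 1 := exp_le_exp.2 (by norm_num)
          nlinarith
        nlinarith [exp_pos |u|]
      rw [div_le_iff₀ hs2]
      calc |exp x - 1 - x| ≤ 3 * exp (|u|+1/2) := hub
        _ = (3 * exp (|u|+1/2)) * 1 := by ring
        _ ≤ (3 * exp (|u|+1/2)) * (s^2 * (|u|+1/2)^2) := by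
            have h7 : (0:ℝ) < 3 * exp (|u|+1/2) := by positivity
            nlinarith
        _ ≤ 3*(3*exp |u|) * (s^2*(|u|+1/2)^2) := by
            refine mul_le_mul_of_nonneg_right (by linarith) ?_
            positivity
        _ ≤ 9*exp |u| * (s^2*(2*(u^2+1))) := by
            have h9 : s^2*(|u|+1/2)^2 ≤ s^2*(2*(u^2+1)) := mul_le_mul_of_nonneg_left hsq hs2.le
            have h10 : (0:ℝ) ≤ 9*exp |u| := by positivity
            calc 3*(3*exp |u|) * (s^2*(|u|+1/2)^2) = 9*exp |u| * (s^2*(|u|+1/2)^2) := by ring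
              _ ≤ 9*exp |u| * (s^2*(2*(u^2+1))) := mul_le_mul_of_nonneg_left h9 h10
        _ = 18*(u^2+1)*exp |u| * s^2 := by ring
  have hsplit : (exp x - 1 - s*u)/s^2 = (exp x - 1 - x)/s^2 - 1/2 := by
    rw [hxdef]; field_simp; ring
  rw [hsplit]
  have habs2 : |(exp x - 1 - x)/s^2 - 1/2| ≤ |exp x - 1 - x|/s^2 + 1/2 := by
    have h8 := abs_sub ((exp x - 1 - x)/s^2) (1/2 : ℝ)
    rw [abs_div, abs_of_nonneg hs2.le] at h8
    have h9 : |(1/2 : ℝ)| = 1/2 := abs_of_pos (by norm_num)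
    linarith [h8, h9.le, h9.ge]
  have hfin : (1:ℝ)/2 ≤ 2*(u^2+1)*exp |u| := by nlinarith [hE1, sq_nonneg u]
  linarith

lemma ev_abs_le_one : ∀ᶠ x : ℝ in 𝓝[≠](0:ℝ), |x| ≤ 1 := by
  have h : ∀ᶠ x : ℝ in 𝓝 (0:ℝ), |x| ≤ 1 := by
    have hb : Metric.ball (0:ℝ) 1 ∈ 𝓝 (0:ℝ) := Metric.ball_mem_nhds 0 one_pos
    filter_upwards [hb] with x hx
    rw [Metric.mem_ball, Real.dist_eq, sub_zero] at hx
    exact hx.le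
  exact h.filter_mono nhdsWithin_le_nhds

lemma ptw_limit (u : ℝ) :
    Tendsto (fun s : ℝ => (exp (s*u - s^2/2) - 1 - s*u)/s^2) (𝓝[≠](0:ℝ))
      (𝓝 (u^2/2 - 1/2)) := by
  have hx : Tendsto (fun s : ℝ => s*u - s^2/2) (𝓝[≠](0:ℝ)) (𝓝[≠](0:ℝ)) := by
    rw [tendsto_nhdsWithin_iff]
    constructor
    · have hc : Continuous fun s : ℝ => s*u - s^2/2 := by continuity
      have h0 := (hc.tendsto 0).mono_left (nhdsWithin_le_nhds (s := {(0:ℝ)}ᶜ))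
      simpa using h0
    · rcases eq_or_ne u 0 with rfl | hu
      · filter_upwards [self_mem_nhdsWithin] with s hs
        have hs' : s ≠ 0 := hs
        simp only [mem_compl_iff, mem_singleton_iff]
        intro h
        apply hs'
        have h2 : s^2 = 0 := by nlinarith [h]
        exact pow_eq_zero_iff (n := 2) (by norm_num) |>.1 h2
      · have hball : ∀ᶠ s : ℝ in 𝓝[≠](0:ℝ), |s| < |2*u| := by
          have h : ∀ᶠ s : ℝ in 𝓝 (0:ℝ), |s| < |2*u| := by
            have hb : Metric.ball (0:ℝ) |2*u| ∈ 𝓝 (0:ℝ) :=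
              Metric.ball_mem_nhds 0 (abs_pos.2 (mul_ne_zero two_ne_zero hu))
            filter_upwards [hb] with y hy
            rwa [Metric.mem_ball, Real.dist_eq, sub_zero] at hy
          exact h.filter_mono nhdsWithin_le_nhds
        filter_upwards [self_mem_nhdsWithin, hball] with s hs hlt
        have hs' : s ≠ 0 := hs
        simp only [mem_compl_iff, mem_singleton_iff]
        intro h
        have h2 : s * (u - s/2) = 0 := by linarith [h, show s*(u - s/2) = s*u - s^2/2 from by ring]
        rcases mul_eq_zero.1 h2 with h3 | h3
        · exact hs' h3
        · have h4 : s = 2*u := by linarith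
          rw [h4] at hlt
          exact absurd hlt (lt_irrefl _)
  have h2 : Tendsto (fun s : ℝ => (u - s/2)^2) (𝓝[≠](0:ℝ)) (𝓝 (u^2)) := by
    have hc : Continuous fun s : ℝ => (u - s/2)^2 := by continuity
    have h0 := (hc.tendsto 0).mono_left (nhdsWithin_le_nhds (s := {(0:ℝ)}ᶜ))
    simpa using h0
  have hmul := (expE_tendsto.comp hx).mul h2
  have hxne : ∀ᶠ s : ℝ in 𝓝[≠](0:ℝ), s*u - s^2/2 ≠ 0 := hx self_mem_nhdsWithin
  have heq : (fun s : ℝ => ((exp (s*u - s^2/2) - 1 - (s*u - s^2/2))/(s*u - s^2/2)^2) * (u - s/2)^2)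
      =ᶠ[𝓝[≠](0:ℝ)] fun s => (exp (s*u - s^2/2) - 1 - s*u)/s^2 + 1/2 := by
    filter_upwards [self_mem_nhdsWithin, hxne] with s hs hxs
    have hs' : s ≠ 0 := hs
    have hus : u - s/2 ≠ 0 := by
      intro h
      exact hxs (by rw [show s*u - s^2/2 = s*(u - s/2) by ring, h, mul_zero])
    have hx2 : (s*u - s^2/2)^2 = s^2 * (u - s/2)^2 := by ring
    have hA : ∀ A : ℝ, A/(s^2 * (u - s/2)^2)*(u - s/2)^2 = A/s^2 := by
      intro A
      rw [div_mul_eq_mul_div, div_eq_div_iff (by positivity) (by positivity)]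
      ring
    rw [hx2, hA]
    rw [div_add' _ _ _ (by positivity : (s:ℝ)^2 ≠ 0), div_eq_div_iff (by positivity) (by positivity)]
    ring
  have h3 : Tendsto (fun s : ℝ => (exp (s*u - s^2/2) - 1 - s*u)/s^2 + 1/2) (𝓝[≠](0:ℝ))
      (𝓝 (1/2 * u^2)) := by
    refine Tendsto.congr' ?_ hmul
    exact heq
  have h4 := h3.sub_const (1/2 : ℝ)
  have h5 : u^2/2 - 1/2 = 1/2 * u^2 - 1/2 := by ring
  rw [h5]
  simpa using h4

lemma lam_zero (p : ℝ) : lam p 0 = ∫ u, |u| ^ p ∂γ := by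
  unfold lam; norm_num

lemma lam_rep (p : ℝ) (s : ℝ) :
    lam p s = ∫ u, exp (s*u - s^2/2) * |u| ^ p ∂γ := by
  have hmeas : AEStronglyMeasurable (fun u : ℝ => |u| ^ p) (γ.map (fun z => z + s)) := by
    apply Measurable.aestronglyMeasurable; fun_prop
  have h1 : lam p s = ∫ u, |u| ^ p ∂(γ.map (fun z => z + s)) := by
    rw [integral_map (by fun_prop) hmeas]
    rfl
  have h2 : γ.map (fun z => z + s) = gaussianReal s 1 := by
    rw [γ]
    simpa using gaussianReal_map_add_const (μ := 0) (v := 1) s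
  have h3 : ∫ x, gaussianPDFReal s 1 x * |x| ^ p
      = ∫ x, gaussianPDFReal 0 1 x * (exp (s*x - s^2/2) * |x| ^ p) := by
    congr 1; funext x; rw [pdf_shift]; ring
  rw [h1, h2, integral_gauss_pdf, γ, integral_gauss_pdf]
  exact h3

/-- For each `p ∈ (-1,∞)`, `(λ_p(s) − λ_p(0))/s² → (p/2)·λ_p(0)` as `s → 0`, `s ≠ 0`. -/
theorem stmt5 (p : ℝ) (hp : -1 < p) :
    Filter.Tendsto (fun s : ℝ => (lam p s - lam p 0) / s ^ 2)
      (nhdsWithin 0 {(0 : ℝ)}ᶜ) (nhds (p / 2 * lam p 0)) := by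
  have ih0 : Integrable (fun u : ℝ => |u| ^ p) γ := by
    have h := int_gamma p 0 hp
    simpa using h
  have ih1 : Integrable (fun u : ℝ => u * |u| ^ p) γ := by
    refine (int_gamma (p+1) 0 (by linarith)).mono'
      (Measurable.aestronglyMeasurable (by fun_prop)) (ae_of_all _ fun u => ?_)
    rw [Real.norm_eq_abs, abs_mul, abs_of_nonneg (rpow_nonneg (abs_nonneg u) p),
      abs_rpow_succ hp u, zero_mul, Real.exp_zero, mul_one]
  have ih2 : Integrable (fun u : ℝ => u^2 * |u| ^ p) γ := by
    refine (int_gamma (p+2) 0 (by linarith)).mono'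
      (Measurable.aestronglyMeasurable (by fun_prop)) (ae_of_all _ fun u => ?_)
    rw [Real.norm_eq_abs, abs_mul, abs_of_nonneg (rpow_nonneg (abs_nonneg u) p),
      abs_of_nonneg (sq_nonneg u), abs_rpow_two hp u, zero_mul, Real.exp_zero, mul_one]
  have ihexp : ∀ s : ℝ, Integrable (fun u : ℝ => exp (s*u - s^2/2) * |u| ^ p) γ := by
    intro s
    refine (int_gamma p |s| hp).mono'
      (Measurable.aestronglyMeasurable (by fun_prop)) (ae_of_all _ fun u => ?_)
    have hle : exp (s*u - s^2/2) ≤ exp (|s| * |u|) := by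
      refine exp_le_exp.2 ?_
      have h1 : s*u ≤ |s| * |u| := by
        calc s*u ≤ |s*u| := le_abs_self _
          _ = |s| * |u| := abs_mul s u
      nlinarith [sq_nonneg s]
    rw [Real.norm_eq_abs, abs_mul, abs_of_pos (exp_pos _),
      abs_of_nonneg (rpow_nonneg (abs_nonneg u) p)]
    calc exp (s*u - s^2/2) * |u| ^ p ≤ exp (|s| * |u|) * |u| ^ p :=
          mul_le_mul_of_nonneg_right hle (rpow_nonneg (abs_nonneg u) p)
      _ = |u| ^ p * exp (|s| * |u|) := by ring
  have ihB : Integrable (fun u : ℝ => 20*(u^2+1)*exp |u| * |u| ^ p) γ := by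
    have h2 := int_gamma (p+2) 1 (by linarith)
    have h0 := int_gamma p 1 hp
    refine ((h2.const_mul 20).add (h0.const_mul 20)).congr (ae_of_all _ fun u => ?_)
    simp only [Pi.add_apply]
    rw [← abs_rpow_two hp u]
    simp only [one_mul]
    ring
  have hDCT : Tendsto (fun s : ℝ => ∫ u, ((exp (s*u - s^2/2) - 1 - s*u)/s^2) * |u| ^ p ∂γ)
      (𝓝[≠] (0:ℝ)) (𝓝 (∫ u, (u^2/2 - 1/2) * |u| ^ p ∂γ)) := by
    apply tendsto_integral_filter_of_dominated_convergence
      (fun u : ℝ => 20*(u^2+1)*exp |u| * |u| ^ p)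
    · exact Eventually.of_forall fun s =>
        Measurable.aestronglyMeasurable (by fun_prop)
    · filter_upwards [self_mem_nhdsWithin, ev_abs_le_one] with s hs hs1
      refine ae_of_all _ fun u => ?_
      have hs' : s ≠ 0 := hs
      rw [Real.norm_eq_abs, abs_mul, abs_of_nonneg (rpow_nonneg (abs_nonneg u) p)]
      exact mul_le_mul_of_nonneg_right (key_bound hs' hs1 u) (rpow_nonneg (abs_nonneg u) p)
    · exact ihB
    · exact ae_of_all _ fun u => (ptw_limit u).mul_const _
  have hval : ∫ u, (u^2/2 - 1/2) * |u| ^ p ∂γ = p/2 * lam p 0 := by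
    have h1 : (fun u : ℝ => (u^2/2 - 1/2) * |u| ^ p)
        = fun u : ℝ => (1/2 : ℝ) * (u^2 * |u| ^ p) - (1/2 : ℝ) * (|u| ^ p) := by
      funext u; ring
    have hf2 : Integrable (fun u : ℝ => (1/2 : ℝ) * (u^2 * |u| ^ p)) γ := ih2.const_mul _
    have hg2 : Integrable (fun u : ℝ => (1/2 : ℝ) * (|u| ^ p)) γ := ih0.const_mul _
    rw [h1, integral_sub hf2 hg2, integral_const_mul, integral_const_mul,
      gamma_moment hp, ← lam_zero p]
    ring
  have hident : ∀ s : ℝ, s ≠ 0 →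
      ∫ u, ((exp (s*u - s^2/2) - 1 - s*u)/s^2) * |u| ^ p ∂γ
        = (lam p s - lam p 0)/s^2 := by
    intro s hs
    have h1 : (fun u : ℝ => ((exp (s*u - s^2/2) - 1 - s*u)/s^2) * |u| ^ p)
        = fun u : ℝ => (s^2:ℝ)⁻¹ * (exp (s*u - s^2/2) * |u| ^ p - |u| ^ p - s * (u * |u| ^ p)) := by
      funext u
      have hs2 : s^2 ≠ 0 := pow_ne_zero 2 hs
      field_simp
    have hf1 : Integrable (fun u : ℝ => exp (s*u - s^2/2) * |u| ^ p - |u| ^ p) γ :=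
      (ihexp s).sub ih0
    have hg1 : Integrable (fun u : ℝ => s * (u * |u| ^ p)) γ := ih1.const_mul s
    rw [h1, integral_const_mul, integral_sub hf1 hg1, integral_sub (ihexp s) ih0,
      integral_const_mul, gamma_odd hp, ← lam_rep p s, ← lam_zero p]
    rw [mul_zero, sub_zero, div_eq_inv_mul]
  rw [hval] at hDCT
  refine Tendsto.congr' ?_ hDCT
  filter_upwards [self_mem_nhdsWithin] with s hs
  exact hident s hs
end

section
/- For each p ∈ (-1,∞) there exists a constant C > 0 such that for every real s with |s| > 1 one has | λ_p(s) − |s|^p | ≤ C·|s|^{p-2}. -/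
open MeasureTheory ProbabilityTheory Real Set
open scoped ENNReal NNReal

noncomputable def gpdf (z : ℝ) : ℝ := (Real.sqrt (2*π))⁻¹ * Real.exp (-z^2/2)

lemma gpdf_nonneg (z : ℝ) : 0 ≤ gpdf z := by
  unfold gpdf; positivity

lemma gpdf_eq : gaussianPDFReal 0 1 = gpdf := by
  funext x
  simp [gaussianPDFReal, gpdf]

lemma measurable_gpdf : Measurable gpdf := by
  rw [← gpdf_eq]; exact measurable_gaussianPDFReal 0 1

lemma integral_gamma (g : ℝ → ℝ) : ∫ z, g z ∂γ = ∫ z, gpdf z * g z := by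
  have h1 : γ = (volume : Measure ℝ).withDensity (fun x => ((gpdf x).toNNReal : ℝ≥0∞)) := by
    rw [γ, gaussianReal_of_var_ne_zero _ one_ne_zero]
    congr 1
    funext x
    rw [gaussianPDF, gpdf_eq, ENNReal.ofReal]
  rw [h1, integral_withDensity_eq_integral_smul (measurable_gpdf.real_toNNReal) g]
  congr 1
  funext x
  rw [NNReal.smul_def, Real.coe_toNNReal _ (gpdf_nonneg x), smul_eq_mul]

lemma I0 {q c : ℝ} (hq : -1 < q) (hc : 0 < c) :
    Integrable (fun z : ℝ => |z| ^ q * Real.exp (-c * z ^ 2)) := by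
  have base : IntegrableOn (fun x : ℝ => |x| ^ q * Real.exp (-c * x ^ 2)) (Ioi 0) := by
    refine (integrableOn_rpow_mul_exp_neg_mul_sq hc hq).congr_fun ?_ measurableSet_Ioi
    intro x hx
    simp only [abs_of_pos (show (0:ℝ) < x from hx)]
  rw [← integrableOn_univ, ← @Iio_union_Ici _ _ (0 : ℝ), integrableOn_union,
    integrableOn_Ici_iff_integrableOn_Ioi]
  refine ⟨?_, base⟩
  rw [← (Measure.measurePreserving_neg (volume : Measure ℝ)).integrableOn_comp_preimage
      (Homeomorph.neg ℝ).measurableEmbedding]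
  simp only [Function.comp_def, neg_sq, neg_preimage, neg_Iio, neg_neg, neg_zero, abs_neg]
  exact base

lemma I1 {q c : ℝ} (hq : -1 < q) (hc : 0 < c) (s : ℝ) :
    Integrable (fun z : ℝ => |z + s| ^ q * Real.exp (-c * z ^ 2)) := by
  have key : Integrable (fun u : ℝ => |u| ^ q * Real.exp (-c * (u - s) ^ 2)) := by
    apply Integrable.mono' (((I0 hq (half_pos hc)).const_mul (Real.exp (c * s ^ 2))))
    · exact ((measurable_abs.pow_const q).mul
        (((measurable_id.sub_const s).pow_const 2).const_mul (-c)).exp).aestronglyMeasurable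
    · refine ae_of_all _ fun u => ?_
      rw [Real.norm_eq_abs, abs_mul, abs_of_nonneg (Real.exp_pos _).le,
        abs_of_nonneg (by positivity : (0:ℝ) ≤ |u| ^ q)]
      have h1 : -c * (u - s) ^ 2 ≤ c * s ^ 2 + -(c/2) * u ^ 2 := by nlinarith [sq_nonneg (u - 2*s)]
      calc |u| ^ q * Real.exp (-c * (u - s) ^ 2)
          ≤ |u| ^ q * Real.exp (c * s ^ 2 + -(c/2) * u ^ 2) := by
            exact mul_le_mul_of_nonneg_left (Real.exp_le_exp.2 h1) (by positivity)
        _ = Real.exp (c * s ^ 2) * (|u| ^ q * Real.exp (-(c/2) * u ^ 2)) := by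
            rw [Real.exp_add]; ring
  have := key.comp_add_right s
  simpa using this

lemma integral_gpdf : ∫ z, gpdf z = 1 := by
  rw [← gpdf_eq]
  exact integral_gaussianPDFReal_eq_one 0 one_ne_zero

lemma integral_id_gpdf : ∫ z, gpdf z * z = 0 := by
  have h1 := integral_neg_eq_self (fun z => gpdf z * z) (volume : Measure ℝ)
  have h2 : ∀ z : ℝ, gpdf (-z) * (-z) = -(gpdf z * z) := by
    intro z; unfold gpdf; ring_nf
  simp only [h2, integral_neg] at h1
  linarith

lemma integrable_gpdf : Integrable gpdf := by
  rw [← gpdf_eq]; exact integrable_gaussianPDFReal 0 1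

lemma decay {k s : ℝ} (hk : k ≤ 4) (hs : 1 < s) :
    s ^ k * Real.exp (-(s^2/16)) ≤ 1024 := by
  have h0 : (0:ℝ) < s := by linarith
  have h1 : s ^ k ≤ s ^ (4:ℝ) := Real.rpow_le_rpow_of_exponent_le hs.le hk
  have h2 : s ^ (4:ℝ) = (s^2/16)^2 * 256 := by
    rw [show (4:ℝ) = ((4:ℕ):ℝ) by norm_num, Real.rpow_natCast]; ring
  set x := s^2/16 with hx
  have hx0 : 0 ≤ x := by positivity
  have h3 : x * Real.exp (-(x/2)) ≤ 2 := by
    have hae := Real.add_one_le_exp (x/2)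
    have hexp : x ≤ 2 * Real.exp (x/2) := by nlinarith [Real.exp_pos (x/2)]
    rw [Real.exp_neg]
    calc x * (Real.exp (x/2))⁻¹ ≤ (2 * Real.exp (x/2)) * (Real.exp (x/2))⁻¹ :=
          mul_le_mul_of_nonneg_right hexp (by positivity)
      _ = 2 := by field_simp
  have h4 : Real.exp (-x) = Real.exp (-(x/2)) * Real.exp (-(x/2)) := by
    rw [← Real.exp_add]; ring_nf
  have h5 : 0 ≤ x * Real.exp (-(x/2)) := by positivity
  have h6 : (x * Real.exp (-(x/2)))^2 ≤ 4 := by nlinarith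
  calc s ^ k * Real.exp (-x) ≤ s ^ (4:ℝ) * Real.exp (-x) :=
        mul_le_mul_of_nonneg_right h1 (Real.exp_pos _).le
    _ = 256 * (x * Real.exp (-(x/2)))^2 := by rw [h2, h4]; ring
    _ ≤ 256 * 4 := by nlinarith
    _ ≤ 1024 := by norm_num

lemma taylor_bound {p s z : ℝ} (hs : 1 < s) (hz : |z| ≤ s/2) :
    abs (|z + s| ^ p - s ^ p - p * s ^ (p-1) * z) ≤
      (|p| * |p-1| * ((2:ℝ)^(2-p) + (3/2:ℝ)^(p-2))) * s^(p-2) * z^2 := by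
  have hs0 : (0:ℝ) < s := by linarith
  set B : ℝ := (|p| * |p-1| * ((2:ℝ)^(2-p) + (3/2:ℝ)^(p-2))) * s^(p-2) with hB
  have hIcc : ∀ t ∈ Icc (-(s/2)) (s/2), (0:ℝ) < t + s ∧ s/2 ≤ t + s ∧ t + s ≤ 3*s/2 := by
    intro t ht
    obtain ⟨h1, h2⟩ := ht
    constructor
    · linarith
    constructor <;> linarith
  have hg' : ∀ t ∈ Icc (-(s/2)) (s/2),
      HasDerivAt (fun t => (t+s)^p) (p * (t+s)^(p-1)) t := by
    intro t ht
    have h := ((hasDerivAt_id t).add_const s).rpow_const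
      (p := p) (Or.inl (ne_of_gt (hIcc t ht).1))
    simpa using h
  have hg'' : ∀ t ∈ Icc (-(s/2)) (s/2),
      HasDerivAt (fun t => p * (t+s)^(p-1)) (p * ((p-1) * (t+s)^(p-2))) t := by
    intro t ht
    have h := (((hasDerivAt_id t).add_const s).rpow_const
      (p := p-1) (Or.inl (ne_of_gt (hIcc t ht).1))).const_mul p
    have : p - 1 - 1 = p - 2 := by ring
    simpa [this] using h
  have hBbd : ∀ t ∈ Icc (-(s/2)) (s/2), ‖p * ((p-1) * (t+s)^(p-2))‖ ≤ B := by
    intro t ht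
    obtain ⟨hpos, hlo, hhi⟩ := hIcc t ht
    have habs : ‖p * ((p-1) * (t+s)^(p-2))‖ = |p| * (|p-1| * (t+s)^(p-2)) := by
      rw [Real.norm_eq_abs, abs_mul, abs_mul, abs_of_nonneg (Real.rpow_nonneg hpos.le _)]
    rw [habs]
    have hbase : (t+s)^(p-2) ≤ ((2:ℝ)^(2-p) + (3/2:ℝ)^(p-2)) * s^(p-2) := by
      rcases le_total p 2 with hple | hpge
      · have h1 : (t+s)^(p-2) ≤ (s/2)^(p-2) := by
          apply Real.rpow_le_rpow_of_nonpos (by linarith) hlo (by linarith)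
        have h2 : (s/2)^(p-2) = (2:ℝ)^(2-p) * s^(p-2) := by
          rw [Real.div_rpow hs0.le (by norm_num), show (2:ℝ)-p = -(p-2) by ring,
            Real.rpow_neg (by norm_num : (0:ℝ) ≤ 2), div_eq_mul_inv, mul_comm]
        have h3 : (0:ℝ) ≤ (3/2:ℝ)^(p-2) * s^(p-2) := by positivity
        nlinarith [Real.rpow_nonneg hs0.le (p-2)]
      · have h1 : (t+s)^(p-2) ≤ (3*s/2)^(p-2) :=
          Real.rpow_le_rpow hpos.le hhi (by linarith)
        have h2 : (3*s/2)^(p-2) = (3/2:ℝ)^(p-2) * s^(p-2) := by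
          rw [show (3*s/2 : ℝ) = (3/2) * s by ring,
            Real.mul_rpow (by norm_num) hs0.le]
        have h3 : (0:ℝ) ≤ (2:ℝ)^(2-p) * s^(p-2) := by positivity
        nlinarith [Real.rpow_nonneg hs0.le (p-2)]
    calc |p| * (|p-1| * (t+s)^(p-2))
        ≤ |p| * (|p-1| * (((2:ℝ)^(2-p) + (3/2:ℝ)^(p-2)) * s^(p-2))) := by
          gcongr
      _ = B := by rw [hB]; ring
  have h0mem : (0:ℝ) ∈ Icc (-(s/2)) (s/2) := by
    constructor <;> [linarith; linarith]
  have hzmem : z ∈ Icc (-(s/2)) (s/2) := by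
    constructor <;> [linarith [neg_abs_le z]; linarith [le_abs_self z]]
  -- Step 1 : bound on |g' t - g' 0|
  have key1 : ∀ t ∈ Icc (-(s/2)) (s/2), |p * (t+s)^(p-1) - p * s^(p-1)| ≤ B * |t| := by
    intro t ht
    have := (convex_Icc (-(s/2)) (s/2)).norm_image_sub_le_of_norm_hasDerivWithin_le
      (f := fun t => p * (t+s)^(p-1)) (f' := fun t => p * ((p-1) * (t+s)^(p-2)))
      (fun u hu => (hg'' u hu).hasDerivWithinAt) hBbd h0mem ht
    simpa [Real.norm_eq_abs] using this
  -- Step 2 : Taylor bound via MVT on uIcc 0 z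
  have hsub : uIcc (0:ℝ) z ⊆ Icc (-(s/2)) (s/2) := by
    intro t ht
    rcases le_total (0:ℝ) z with h | h
    · rw [uIcc_of_le h] at ht
      obtain ⟨h1, h2⟩ := ht
      constructor <;> nlinarith [hzmem.1, hzmem.2]
    · rw [uIcc_of_ge h] at ht
      obtain ⟨h1, h2⟩ := ht
      constructor <;> nlinarith [hzmem.1, hzmem.2]
  have habs_t : ∀ t ∈ uIcc (0:ℝ) z, |t| ≤ |z| := by
    intro t ht
    rcases le_total (0:ℝ) z with h | h
    · rw [uIcc_of_le h] at ht
      rw [abs_of_nonneg ht.1, abs_of_nonneg h]; exact ht.2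
    · rw [uIcc_of_ge h] at ht
      rw [abs_of_nonpos (le_trans ht.2 (le_refl 0)), abs_of_nonpos h]
      linarith [ht.1]
  have hh : ∀ t ∈ uIcc (0:ℝ) z,
      HasDerivWithinAt (fun t => (t+s)^p - (s^p + p * s^(p-1) * t))
        (p * (t+s)^(p-1) - p * s^(p-1)) (uIcc (0:ℝ) z) t := by
    intro t ht
    have h1 := hg' t (hsub ht)
    have h2 : HasDerivAt (fun t : ℝ => s^p + p * s^(p-1) * t) (p * s^(p-1)) t := by
      exact (((hasDerivAt_id t).const_mul (p * s^(p-1))).const_add (s^p)).congr_deriv (mul_one _)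
    exact (h1.sub h2).hasDerivWithinAt
  have key2 := (convex_uIcc (0:ℝ) z).norm_image_sub_le_of_norm_hasDerivWithin_le
    (f' := fun t => p * (t+s)^(p-1) - p * s^(p-1)) hh
    (fun t ht => by
      rw [Real.norm_eq_abs]
      calc |p * (t+s)^(p-1) - p * s^(p-1)| ≤ B * |t| := key1 t (hsub ht)
        _ ≤ B * |z| := by
            have hB0 : 0 ≤ B := by rw [hB]; positivity
            exact mul_le_mul_of_nonneg_left (habs_t t ht) hB0)
    (left_mem_uIcc) (right_mem_uIcc)
  have hzpos : 0 < z + s := by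
    have := hzmem.1; linarith
  have hfinal : |(z+s)^p - s^p - p * s^(p-1) * z| ≤ B * |z| * |z| := by
    have hsimp : ((0:ℝ)+s)^p - (s^p + p * s^(p-1) * 0) = 0 := by
      simp
    calc |(z+s)^p - s^p - p * s^(p-1) * z|
        = ‖((z+s)^p - (s^p + p * s^(p-1) * z)) - (((0:ℝ)+s)^p - (s^p + p * s^(p-1) * 0))‖ := by
          rw [hsimp, sub_zero, Real.norm_eq_abs]; ring_nf
      _ ≤ B * |z| * ‖z - 0‖ := key2
      _ = B * |z| * |z| := by rw [sub_zero, Real.norm_eq_abs]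
  rw [abs_of_pos hzpos]
  calc |(z+s)^p - s^p - p * s^(p-1) * z| ≤ B * |z| * |z| := hfinal
    _ = B * z^2 := by rw [mul_assoc, abs_mul_abs_self]; ring

lemma integrable_gpdf_abs_rpow {q : ℝ} (hq : -1 < q) (s : ℝ) :
    Integrable (fun z : ℝ => gpdf z * |z + s| ^ q) := by
  refine ((I1 hq (by norm_num : (0:ℝ) < 1/2) s).const_mul ((Real.sqrt (2*π))⁻¹)).congr ?_
  refine ae_of_all _ fun z => ?_
  dsimp only
  unfold gpdf
  rw [show (-(1/2:ℝ) * z^2) = -z^2/2 by ring]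
  ring

lemma integrable_gpdf_id : Integrable (fun z : ℝ => gpdf z * z) := by
  refine ((integrable_mul_exp_neg_mul_sq (by norm_num : (0:ℝ) < 1/2)).const_mul
    ((Real.sqrt (2*π))⁻¹)).congr ?_
  refine ae_of_all _ fun z => ?_
  dsimp only
  unfold gpdf
  rw [show (-(1/2:ℝ) * z^2) = -z^2/2 by ring]
  ring

lemma integrable_gpdf_sq : Integrable (fun z : ℝ => gpdf z * z ^ 2) := by
  refine ((I0 (by norm_num : (-1:ℝ) < 2) (by norm_num : (0:ℝ) < 1/2)).const_mul
    ((Real.sqrt (2*π))⁻¹)).congr ?_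
  refine ae_of_all _ fun z => ?_
  dsimp only
  have h2 : |z| ^ (2:ℝ) = z^2 := by
    rw [show (2:ℝ) = ((2:ℕ):ℝ) by norm_num, Real.rpow_natCast, sq_abs]
  rw [h2]
  unfold gpdf
  rw [show (-(1/2:ℝ) * z^2) = -z^2/2 by ring]
  ring

lemma integrable_exp4_abs_rpow {q : ℝ} (hq : -1 < q) (s : ℝ) :
    Integrable (fun z : ℝ => Real.exp (-z^2/4) * |z + s| ^ q) := by
  refine (I1 hq (by norm_num : (0:ℝ) < 1/4) s).congr ?_
  refine ae_of_all _ fun z => ?_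
  dsimp only
  rw [show (-(1/4:ℝ) * z^2) = -z^2/4 by ring]
  ring

lemma integrable_exp4 : Integrable (fun z : ℝ => Real.exp (-z^2/4)) := by
  refine (integrable_exp_neg_mul_sq (by norm_num : (0:ℝ) < 1/4)).congr ?_
  refine ae_of_all _ fun z => ?_
  dsimp only
  rw [show (-(1/4:ℝ) * z^2) = -z^2/4 by ring]

lemma integrable_exp4_abs : Integrable (fun z : ℝ => Real.exp (-z^2/4) * |z|) := by
  refine (I0 (by norm_num : (-1:ℝ) < 1) (by norm_num : (0:ℝ) < 1/4)).congr ?_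
  refine ae_of_all _ fun z => ?_
  dsimp only
  rw [Real.rpow_one, show (-(1/4:ℝ) * z^2) = -z^2/4 by ring]
  ring

lemma integrableOn_abs_rpow_Icc {p : ℝ} (hp : -1 < p) :
    IntegrableOn (fun u : ℝ => |u| ^ p) (Icc (-1:ℝ) 1) := by
  refine Integrable.mono'
    (((I0 hp (by norm_num : (0:ℝ) < 1/4)).const_mul (Real.exp (1/4))).integrableOn) ?_ ?_
  · exact ((measurable_abs.pow_const p).aestronglyMeasurable).restrict
  · filter_upwards [ae_restrict_mem measurableSet_Icc] with u hu
    rw [Real.norm_eq_abs, abs_of_nonneg (by positivity : (0:ℝ) ≤ |u| ^ p)]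
    have hu2 : u^2 ≤ 1 := by nlinarith [hu.1, hu.2]
    have : Real.exp (-(1/4)) ≤ Real.exp (-(1/4) * u^2) := by
      apply Real.exp_le_exp.2; nlinarith
    calc |u| ^ p = Real.exp (1/4) * (|u| ^ p * Real.exp (-(1/4))) := by
          rw [show Real.exp (1/4) * (|u|^p * Real.exp (-(1/4)))
              = |u|^p * (Real.exp (1/4) * Real.exp (-(1/4))) by ring, ← Real.exp_add]
          norm_num
      _ ≤ Real.exp (1/4) * (|u| ^ p * Real.exp (-(1/4) * u^2)) := by
          have h0 : (0:ℝ) ≤ |u| ^ p := by positivity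
          have := mul_le_mul_of_nonneg_left this h0
          nlinarith [Real.exp_pos (1/4 : ℝ)]

lemma shift_stuff {p : ℝ} (hp : -1 < p) (s : ℝ) :
    IntegrableOn (fun z : ℝ => |z + s| ^ p) ((fun z : ℝ => z + s) ⁻¹' (Icc (-1:ℝ) 1)) ∧
    ∫ z in ((fun z : ℝ => z + s) ⁻¹' (Icc (-1:ℝ) 1)), |z + s| ^ p
      = ∫ u in Icc (-1:ℝ) 1, |u| ^ p := by
  have mp := measurePreserving_add_right (volume : Measure ℝ) s
  have emb := (Homeomorph.addRight s).measurableEmbedding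
  constructor
  · have := (mp.integrableOn_comp_preimage emb
      (f := fun u : ℝ => |u| ^ p) (s := Icc (-1:ℝ) 1)).mpr (integrableOn_abs_rpow_Icc hp)
    simpa [Function.comp_def] using this
  · exact mp.setIntegral_preimage_emb emb (fun u : ℝ => |u| ^ p) (Icc (-1:ℝ) 1)

lemma one_add_abs_rpow_le {q x : ℝ} (hq0 : 0 ≤ q) :
    (1 + |x|) ^ q ≤ 2 ^ q + 2 ^ q * |x| ^ q := by
  rcases le_total (|x|) 1 with h | h
  · have h1 : (1 + |x|) ^ q ≤ (2:ℝ) ^ q :=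
      Real.rpow_le_rpow (by positivity) (by linarith) hq0
    have h2 : (0:ℝ) ≤ 2 ^ q * |x| ^ q := by positivity
    linarith
  · have h1 : (1 + |x|) ^ q ≤ (2 * |x|) ^ q :=
      Real.rpow_le_rpow (by positivity) (by linarith) hq0
    have h2 : ((2:ℝ) * |x|) ^ q = 2 ^ q * |x| ^ q :=
      Real.mul_rpow (by norm_num) (abs_nonneg x)
    have h3 : (0:ℝ) < 2 ^ q := by positivity
    linarith

lemma integrable_exp4_one_abs {q : ℝ} (hq0 : 0 ≤ q) :
    Integrable (fun z : ℝ => Real.exp (-z^2/4) * (1 + |z|) ^ q) := by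
  have hq : (-1:ℝ) < q := by linarith
  have hint : Integrable (fun z : ℝ => Real.exp (-z^2/4) * |z| ^ q) := by
    have := integrable_exp4_abs_rpow hq 0
    simpa using this
  refine Integrable.mono' ((integrable_exp4.const_mul (2^q)).add (hint.const_mul (2^q))) ?_ ?_
  · exact (((measurable_id.pow_const 2).neg.div_const 4).exp.mul
      ((measurable_const.add measurable_abs).pow_const q)).aestronglyMeasurable
  · refine ae_of_all _ fun z => ?_
    have h0 : (0:ℝ) < Real.exp (-z^2/4) := Real.exp_pos _
    rw [Real.norm_eq_abs, abs_of_nonneg (by positivity : (0:ℝ) ≤ Real.exp (-z^2/4) * (1+|z|)^q)]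
    have := mul_le_mul_of_nonneg_left (one_add_abs_rpow_le (x := z) hq0) h0.le
    simp only [Pi.add_apply]
    nlinarith

lemma integrable_F {p : ℝ} (hp : -1 < p) (s : ℝ) :
    Integrable (fun z : ℝ => gpdf z * (|z + s| ^ p - s ^ p - p * s ^ (p-1) * z)) := by
  have hFc : Integrable (fun z : ℝ => gpdf z * (p * s ^ (p-1) * z)) := by
    refine (integrable_gpdf_id.const_mul (p * s ^ (p-1))).congr (ae_of_all _ fun z => ?_)
    dsimp only; ring
  refine (((integrable_gpdf_abs_rpow hp s).sub (integrable_gpdf.mul_const (s^p))).sub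
    hFc).congr (ae_of_all _ fun z => ?_)
  simp only [Pi.sub_apply]; ring

lemma lam_identity {p : ℝ} (hp : -1 < p) (s : ℝ) :
    lam p s - s ^ p = ∫ z, gpdf z * (|z + s| ^ p - s ^ p - p * s ^ (p-1) * z) := by
  have hFc : Integrable (fun z : ℝ => gpdf z * (p * s ^ (p-1) * z)) := by
    refine (integrable_gpdf_id.const_mul (p * s ^ (p-1))).congr (ae_of_all _ fun z => ?_)
    dsimp only; ring
  have hsplit : (fun z : ℝ => gpdf z * (|z + s| ^ p - s ^ p - p * s ^ (p-1) * z))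
      = fun z : ℝ => (gpdf z * |z + s| ^ p - gpdf z * s ^ p) - gpdf z * (p * s ^ (p-1) * z) := by
    funext z; ring
  have hA : Integrable (fun z : ℝ => gpdf z * |z + s| ^ p - gpdf z * s ^ p) := by
    refine ((integrable_gpdf_abs_rpow hp s).sub
      (integrable_gpdf.mul_const (s^p))).congr (ae_of_all _ fun z => ?_)
    simp only [Pi.sub_apply]
  rw [hsplit, integral_sub hA hFc,
    integral_sub (integrable_gpdf_abs_rpow hp s) (integrable_gpdf.mul_const (s^p))]
  have h1 : lam p s = ∫ z, gpdf z * |z + s| ^ p := by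
    unfold lam; rw [integral_gamma]
  have h2 : ∫ z : ℝ, gpdf z * s ^ p = s ^ p := by
    have : (fun z : ℝ => gpdf z * s ^ p) = fun z : ℝ => s ^ p * gpdf z := by funext z; ring
    rw [this, integral_const_mul, integral_gpdf, mul_one]
  have h3 : ∫ z : ℝ, gpdf z * (p * s ^ (p-1) * z) = 0 := by
    have : (fun z : ℝ => gpdf z * (p * s ^ (p-1) * z))
        = fun z : ℝ => (p * s ^ (p-1)) * (gpdf z * z) := by funext z; ring
    rw [this, integral_const_mul, integral_id_gpdf, mul_zero]
  rw [h1, h2, h3, sub_zero]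

lemma inner_bound {p s : ℝ} (hp : -1 < p) (hs : 1 < s) :
    ∫ z in {z : ℝ | |z| ≤ s/2}, |gpdf z * (|z + s| ^ p - s ^ p - p * s ^ (p-1) * z)|
      ≤ (|p| * |p-1| * ((2:ℝ)^(2-p) + (3/2:ℝ)^(p-2))) * s^(p-2) * ∫ z, gpdf z * z ^ 2 := by
  have hs0 : (0:ℝ) < s := by linarith
  have hE : MeasurableSet {z : ℝ | |z| ≤ s/2} := measurableSet_le measurable_abs measurable_const
  have hmono : ∫ z in {z : ℝ | |z| ≤ s/2}, |gpdf z * (|z + s| ^ p - s ^ p - p * s ^ (p-1) * z)|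
      ≤ ∫ z in {z : ℝ | |z| ≤ s/2},
        ((|p| * |p-1| * ((2:ℝ)^(2-p) + (3/2:ℝ)^(p-2))) * s^(p-2)) * (gpdf z * z ^ 2) := by
    refine setIntegral_mono_on ((integrable_F hp s).abs.integrableOn)
      ((integrable_gpdf_sq.const_mul _).integrableOn) hE fun z hz => ?_
    have hz' : |z| ≤ s/2 := hz
    rw [abs_mul, abs_of_nonneg (gpdf_nonneg z)]
    calc gpdf z * |(|z + s| ^ p - s ^ p - p * s ^ (p-1) * z)|
        ≤ gpdf z * ((|p| * |p-1| * ((2:ℝ)^(2-p) + (3/2:ℝ)^(p-2))) * s^(p-2) * z ^ 2) :=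
          mul_le_mul_of_nonneg_left (taylor_bound hs hz') (gpdf_nonneg z)
      _ = ((|p| * |p-1| * ((2:ℝ)^(2-p) + (3/2:ℝ)^(p-2))) * s^(p-2)) * (gpdf z * z ^ 2) := by
          ring
  have hle2 : ∫ z in {z : ℝ | |z| ≤ s/2},
        ((|p| * |p-1| * ((2:ℝ)^(2-p) + (3/2:ℝ)^(p-2))) * s^(p-2)) * (gpdf z * z ^ 2)
      ≤ ∫ z, ((|p| * |p-1| * ((2:ℝ)^(2-p) + (3/2:ℝ)^(p-2))) * s^(p-2)) * (gpdf z * z ^ 2) := by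
    refine setIntegral_le_integral (integrable_gpdf_sq.const_mul _)
      (ae_of_all _ fun z => ?_)
    have := gpdf_nonneg z
    positivity
  calc ∫ z in {z : ℝ | |z| ≤ s/2}, |gpdf z * (|z + s| ^ p - s ^ p - p * s ^ (p-1) * z)|
      ≤ _ := hmono
    _ ≤ _ := hle2
    _ = (|p| * |p-1| * ((2:ℝ)^(2-p) + (3/2:ℝ)^(p-2))) * s^(p-2) * ∫ z, gpdf z * z ^ 2 := by
        rw [integral_const_mul]

lemma A_bound {p : ℝ} (hp : -1 < p) {s : ℝ} (hs0 : 0 < s) :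
    ∫ z : ℝ, Real.exp (-z^2/4) * |z + s| ^ p
      ≤ (∫ u in Icc (-1:ℝ) 1, |u| ^ p)
        + (1+s)^(max p 0) * ∫ z : ℝ, Real.exp (-z^2/4) * (1+|z|)^(max p 0) := by
  have hq0 : 0 ≤ max p 0 := le_max_right _ _
  obtain ⟨hSint, hSval⟩ := shift_stuff hp s
  have hS : MeasurableSet ((fun z : ℝ => z + s) ⁻¹' Icc (-1:ℝ) 1) :=
    measurableSet_Icc.preimage (measurable_add_const s)
  have hind : Integrable (Set.indicator ((fun z : ℝ => z + s) ⁻¹' Icc (-1:ℝ) 1)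
      (fun z => |z + s| ^ p)) := (integrable_indicator_iff hS).2 hSint
  have hrhs2 : Integrable (fun z : ℝ =>
      (1+s)^(max p 0) * (Real.exp (-z^2/4) * (1+|z|)^(max p 0))) :=
    (integrable_exp4_one_abs hq0).const_mul _
  have hpt : ∀ z : ℝ, Real.exp (-z^2/4) * |z + s| ^ p
      ≤ Set.indicator ((fun z : ℝ => z + s) ⁻¹' Icc (-1:ℝ) 1) (fun z => |z + s| ^ p) z
        + (1+s)^(max p 0) * (Real.exp (-z^2/4) * (1+|z|)^(max p 0)) := by
    intro z
    by_cases hcase : |z + s| ≤ 1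
    · have hzS : z ∈ ((fun z : ℝ => z + s) ⁻¹' Icc (-1:ℝ) 1) := by
        simp only [Set.mem_preimage, Set.mem_Icc]
        exact abs_le.1 hcase
      rw [Set.indicator_of_mem hzS]
      have h1 : Real.exp (-z^2/4) ≤ 1 := Real.exp_le_one_iff.2 (by nlinarith [sq_nonneg z])
      have h2 : Real.exp (-z^2/4) * |z + s| ^ p ≤ |z + s| ^ p :=
        mul_le_of_le_one_left (by positivity) h1
      have h3 : (0:ℝ) ≤ (1+s)^(max p 0) * (Real.exp (-z^2/4) * (1+|z|)^(max p 0)) := by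
        positivity
      linarith
    · push_neg at hcase
      have hzS : z ∉ ((fun z : ℝ => z + s) ⁻¹' Icc (-1:ℝ) 1) := by
        simp only [Set.mem_preimage, Set.mem_Icc]
        intro h
        exact absurd (abs_le.2 h) (not_le.2 hcase)
      rw [Set.indicator_of_notMem hzS, zero_add]
      have hb : |z + s| ≤ (1+|z|) * (1+s) := by
        have h1 := abs_add_le z s
        rw [abs_of_pos hs0] at h1
        nlinarith [abs_nonneg z]
      have hchain : |z + s| ^ p ≤ (1+|z|)^(max p 0) * (1+s)^(max p 0) := by
        calc |z + s| ^ p ≤ |z + s| ^ (max p 0) :=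
              Real.rpow_le_rpow_of_exponent_le hcase.le (le_max_left p 0)
          _ ≤ ((1+|z|) * (1+s)) ^ (max p 0) :=
              Real.rpow_le_rpow (abs_nonneg _) hb hq0
          _ = (1+|z|)^(max p 0) * (1+s)^(max p 0) :=
              Real.mul_rpow (by positivity) (by positivity)
      calc Real.exp (-z^2/4) * |z + s| ^ p
          ≤ Real.exp (-z^2/4) * ((1+|z|)^(max p 0) * (1+s)^(max p 0)) :=
            mul_le_mul_of_nonneg_left hchain (Real.exp_pos _).le
        _ = (1+s)^(max p 0) * (Real.exp (-z^2/4) * (1+|z|)^(max p 0)) := by ring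
  calc ∫ z : ℝ, Real.exp (-z^2/4) * |z + s| ^ p
      ≤ ∫ z : ℝ, (Set.indicator ((fun z : ℝ => z + s) ⁻¹' Icc (-1:ℝ) 1)
          (fun z => |z + s| ^ p) z
        + (1+s)^(max p 0) * (Real.exp (-z^2/4) * (1+|z|)^(max p 0))) :=
        integral_mono (integrable_exp4_abs_rpow hp s) (hind.add hrhs2) hpt
    _ = (∫ u in Icc (-1:ℝ) 1, |u| ^ p)
        + (1+s)^(max p 0) * ∫ z : ℝ, Real.exp (-z^2/4) * (1+|z|)^(max p 0) := by
        rw [integral_add hind hrhs2, integral_indicator hS, hSval, integral_const_mul]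

lemma outer_bound {p : ℝ} (hp : -1 < p) {s : ℝ} (hs : 1 < s) :
    ∫ z in {z : ℝ | |z| ≤ s/2}ᶜ, |gpdf z * (|z + s| ^ p - s ^ p - p * s ^ (p-1) * z)|
      ≤ ((Real.sqrt (2*π))⁻¹ * Real.exp (-(s^2/16))) *
        ((∫ u in Icc (-1:ℝ) 1, |u| ^ p)
          + (1+s)^(max p 0) * (∫ z : ℝ, Real.exp (-z^2/4) * (1+|z|)^(max p 0))
          + s^p * (∫ z : ℝ, Real.exp (-z^2/4))
          + |p| * s^(p-1) * (∫ z : ℝ, Real.exp (-z^2/4) * |z|)) := by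
  have hs0 : (0:ℝ) < s := by linarith
  have hE : MeasurableSet {z : ℝ | |z| ≤ s/2} := measurableSet_le measurable_abs measurable_const
  have hq0 : 0 ≤ max p 0 := le_max_right _ _
  have hW : Integrable (fun z : ℝ =>
      Real.exp (-z^2/4) * (|z + s| ^ p + s^p + |p| * s^(p-1) * |z|)) := by
    have h3 : Integrable (fun z : ℝ => Real.exp (-z^2/4) * (|p| * s^(p-1) * |z|)) := by
      refine ((integrable_exp4_abs).const_mul (|p| * s^(p-1))).congr (ae_of_all _ fun z => ?_)
      dsimp only; ring
    refine (((integrable_exp4_abs_rpow hp s).add (integrable_exp4.mul_const (s^p))).add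
      h3).congr (ae_of_all _ fun z => ?_)
    simp only [Pi.add_apply]; ring
  have hD : ∀ z ∈ {z : ℝ | |z| ≤ s/2}ᶜ,
      |gpdf z * (|z + s| ^ p - s ^ p - p * s ^ (p-1) * z)|
        ≤ ((Real.sqrt (2*π))⁻¹ * Real.exp (-(s^2/16))) *
          (Real.exp (-z^2/4) * (|z + s| ^ p + s^p + |p| * s^(p-1) * |z|)) := by
    intro z hz
    have hz' : s/2 < |z| := by
      simpa [Set.mem_compl_iff, Set.mem_setOf_eq, not_le] using hz
    rw [abs_mul, abs_of_nonneg (gpdf_nonneg z)]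
    have htri : |(|z + s| ^ p - s ^ p - p * s ^ (p-1) * z)|
        ≤ |z + s| ^ p + s^p + |p| * s^(p-1) * |z| := by
      have t1 := abs_add_le ((|z + s| ^ p) - s ^ p) (-(p * s ^ (p-1) * z))
      have t2 := abs_add_le (|z + s| ^ p) (-(s ^ p))
      simp only [abs_neg, ← sub_eq_add_neg] at t1 t2
      have e1 : |(|z + s| ^ p)| = |z + s| ^ p := abs_of_nonneg (by positivity)
      have e2 : |s ^ p| = s ^ p := abs_of_nonneg (Real.rpow_nonneg hs0.le p)
      have e3 : |p * s ^ (p-1) * z| = |p| * s^(p-1) * |z| := by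
        rw [abs_mul, abs_mul, abs_of_nonneg (Real.rpow_nonneg hs0.le (p-1))]
      linarith
    have hgb : gpdf z ≤ ((Real.sqrt (2*π))⁻¹ * Real.exp (-(s^2/16))) * Real.exp (-z^2/4) := by
      unfold gpdf
      rw [mul_assoc, ← Real.exp_add]
      refine mul_le_mul_of_nonneg_left ?_ (by positivity)
      apply Real.exp_le_exp.2
      have hsq : s^2/4 ≤ z^2 := by nlinarith [sq_abs z, abs_nonneg z]
      nlinarith
    calc gpdf z * |(|z + s| ^ p - s ^ p - p * s ^ (p-1) * z)|
        ≤ gpdf z * (|z + s| ^ p + s^p + |p| * s^(p-1) * |z|) :=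
          mul_le_mul_of_nonneg_left htri (gpdf_nonneg z)
      _ ≤ (((Real.sqrt (2*π))⁻¹ * Real.exp (-(s^2/16))) * Real.exp (-z^2/4)) *
            (|z + s| ^ p + s^p + |p| * s^(p-1) * |z|) := by
          refine mul_le_mul_of_nonneg_right hgb ?_
          have h1 : (0:ℝ) ≤ |z + s| ^ p := by positivity
          have h2 : (0:ℝ) ≤ s ^ p := Real.rpow_nonneg hs0.le p
          have h3 : (0:ℝ) ≤ |p| * s^(p-1) * |z| := by
            have := Real.rpow_nonneg hs0.le (p-1); positivity
          linarith
      _ = ((Real.sqrt (2*π))⁻¹ * Real.exp (-(s^2/16))) *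
            (Real.exp (-z^2/4) * (|z + s| ^ p + s^p + |p| * s^(p-1) * |z|)) := by ring
  have hWsum : ∫ z : ℝ, Real.exp (-z^2/4) * (|z + s| ^ p + s^p + |p| * s^(p-1) * |z|)
      = (∫ z : ℝ, Real.exp (-z^2/4) * |z + s| ^ p)
        + s^p * (∫ z : ℝ, Real.exp (-z^2/4))
        + |p| * s^(p-1) * (∫ z : ℝ, Real.exp (-z^2/4) * |z|) := by
    have e1 : (fun z : ℝ => Real.exp (-z^2/4) * (|z + s| ^ p + s^p + |p| * s^(p-1) * |z|))
        = fun z : ℝ => (Real.exp (-z^2/4) * |z + s| ^ p + s^p * Real.exp (-z^2/4))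
          + |p| * s^(p-1) * (Real.exp (-z^2/4) * |z|) := by
      funext z; ring
    have i2 : Integrable (fun z : ℝ => s^p * Real.exp (-z^2/4)) := integrable_exp4.const_mul _
    have i3 : Integrable (fun z : ℝ => |p| * s^(p-1) * (Real.exp (-z^2/4) * |z|)) :=
      integrable_exp4_abs.const_mul _
    have i12 : Integrable (fun z : ℝ =>
        Real.exp (-z^2/4) * |z + s| ^ p + s^p * Real.exp (-z^2/4)) := by
      refine ((integrable_exp4_abs_rpow hp s).add i2).congr (ae_of_all _ fun z => ?_)
      simp [Pi.add_apply]
    rw [e1, integral_add i12 i3,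
      integral_add (integrable_exp4_abs_rpow hp s) i2, integral_const_mul, integral_const_mul]
  have hstep : ∫ z in {z : ℝ | |z| ≤ s/2}ᶜ, |gpdf z * (|z + s| ^ p - s ^ p - p * s ^ (p-1) * z)|
      ≤ ((Real.sqrt (2*π))⁻¹ * Real.exp (-(s^2/16))) *
        ∫ z : ℝ, Real.exp (-z^2/4) * (|z + s| ^ p + s^p + |p| * s^(p-1) * |z|) := by
    calc ∫ z in {z : ℝ | |z| ≤ s/2}ᶜ, |gpdf z * (|z + s| ^ p - s ^ p - p * s ^ (p-1) * z)|
        ≤ ∫ z in {z : ℝ | |z| ≤ s/2}ᶜ,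
            ((Real.sqrt (2*π))⁻¹ * Real.exp (-(s^2/16))) *
              (Real.exp (-z^2/4) * (|z + s| ^ p + s^p + |p| * s^(p-1) * |z|)) :=
          setIntegral_mono_on ((integrable_F hp s).abs.integrableOn)
            ((hW.const_mul _).integrableOn) hE.compl hD
      _ ≤ ∫ z : ℝ, ((Real.sqrt (2*π))⁻¹ * Real.exp (-(s^2/16))) *
              (Real.exp (-z^2/4) * (|z + s| ^ p + s^p + |p| * s^(p-1) * |z|)) := by
          refine setIntegral_le_integral (hW.const_mul _) (ae_of_all _ fun z => ?_)
          have h1 : (0:ℝ) ≤ |z + s| ^ p := by positivity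
          have h2 : (0:ℝ) ≤ s ^ p := Real.rpow_nonneg hs0.le p
          have h3 : (0:ℝ) ≤ s ^ (p-1) := Real.rpow_nonneg hs0.le (p-1)
          positivity
      _ = ((Real.sqrt (2*π))⁻¹ * Real.exp (-(s^2/16))) *
            ∫ z : ℝ, Real.exp (-z^2/4) * (|z + s| ^ p + s^p + |p| * s^(p-1) * |z|) := by
          rw [integral_const_mul]
  refine le_trans hstep ?_
  refine mul_le_mul_of_nonneg_left ?_ (by positivity)
  rw [hWsum]
  have := A_bound hp hs0
  linarith

lemma decay' {a b s : ℝ} (hs : 1 < s) (h : a - b ≤ 4) :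
    s ^ a * Real.exp (-(s^2/16)) ≤ 1024 * s ^ b := by
  have hs0 : (0:ℝ) < s := by linarith
  have h1 : s ^ a = s ^ (a - b) * s ^ b := by
    rw [← Real.rpow_add hs0]
    congr 1
    ring
  rw [h1]
  have h2 := decay h hs
  calc s ^ (a-b) * s ^ b * Real.exp (-(s^2/16))
      = (s ^ (a-b) * Real.exp (-(s^2/16))) * s ^ b := by ring
    _ ≤ 1024 * s ^ b := mul_le_mul_of_nonneg_right h2 (Real.rpow_nonneg hs0.le b)

lemma main_est {p : ℝ} (hp : -1 < p) :
    ∃ C : ℝ, 0 < C ∧ ∀ s : ℝ, 1 < s → |lam p s - s ^ p| ≤ C * s ^ (p - 2) := by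
  have hq0 : 0 ≤ max p 0 := le_max_right _ _
  have hM2 : 0 ≤ (∫ z : ℝ, gpdf z * z ^ 2) := integral_nonneg (fun z => mul_nonneg (gpdf_nonneg z) (sq_nonneg z))
  have hcp : 0 ≤ (∫ u in Icc (-1:ℝ) 1, |u| ^ p) := setIntegral_nonneg measurableSet_Icc (fun u _ => by positivity)
  have hMq : 0 ≤ (∫ z : ℝ, Real.exp (-z^2/4) * (1+|z|)^(max p 0)) := integral_nonneg (fun z => by positivity)
  have hG1 : 0 ≤ (∫ z : ℝ, Real.exp (-z^2/4)) := integral_nonneg (fun z => by positivity)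
  have hG2 : 0 ≤ (∫ z : ℝ, Real.exp (-z^2/4) * |z|) := integral_nonneg (fun z => by positivity)
  have hK0 : 0 ≤ (|p| * |p-1| * ((2:ℝ)^(2-p) + (3/2:ℝ)^(p-2))) := by positivity
  have hcst : 0 < (Real.sqrt (2*π))⁻¹ := by positivity
  have hY : 0 ≤ ((∫ u in Icc (-1:ℝ) 1, |u| ^ p) + 2^(max p 0) * (∫ z : ℝ, Real.exp (-z^2/4) * (1+|z|)^(max p 0)) + (∫ z : ℝ, Real.exp (-z^2/4)) + |p| * (∫ z : ℝ, Real.exp (-z^2/4) * |z|)) := by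
    have h1 : (0:ℝ) ≤ 2^(max p 0) * (∫ z : ℝ, Real.exp (-z^2/4) * (1+|z|)^(max p 0)) := mul_nonneg (by positivity) hMq
    have h2 : (0:ℝ) ≤ |p| * (∫ z : ℝ, Real.exp (-z^2/4) * |z|) := mul_nonneg (abs_nonneg p) hG2
    linarith
  refine ⟨(|p| * |p-1| * ((2:ℝ)^(2-p) + (3/2:ℝ)^(p-2))) * (∫ z : ℝ, gpdf z * z ^ 2) + (Real.sqrt (2*π))⁻¹ * 1024 * ((∫ u in Icc (-1:ℝ) 1, |u| ^ p) + 2^(max p 0) * (∫ z : ℝ, Real.exp (-z^2/4) * (1+|z|)^(max p 0)) + (∫ z : ℝ, Real.exp (-z^2/4)) + |p| * (∫ z : ℝ, Real.exp (-z^2/4) * |z|)) + 1, ?_, ?_⟩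
  · have h1 : 0 ≤ (|p| * |p-1| * ((2:ℝ)^(2-p) + (3/2:ℝ)^(p-2))) * (∫ z : ℝ, gpdf z * z ^ 2) := mul_nonneg hK0 hM2
    have h2 : 0 ≤ (Real.sqrt (2*π))⁻¹ * 1024 * ((∫ u in Icc (-1:ℝ) 1, |u| ^ p) + 2^(max p 0) * (∫ z : ℝ, Real.exp (-z^2/4) * (1+|z|)^(max p 0)) + (∫ z : ℝ, Real.exp (-z^2/4)) + |p| * (∫ z : ℝ, Real.exp (-z^2/4) * |z|)) := by
      refine mul_nonneg (mul_nonneg hcst.le (by norm_num)) hY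
    linarith
  intro s hs
  have hs0 : (0:ℝ) < s := by linarith
  have hE : MeasurableSet {z : ℝ | |z| ≤ s/2} :=
    measurableSet_le measurable_abs measurable_const
  have hrp : 0 ≤ s ^ (p-2) := Real.rpow_nonneg hs0.le _
  have h1 : |lam p s - s ^ p| ≤ ∫ z, |gpdf z * (|z + s| ^ p - s ^ p - p * s ^ (p-1) * z)| := by
    rw [lam_identity hp s]
    simpa only [Real.norm_eq_abs] using
      norm_integral_le_integral_norm (μ := volume)
        (fun z : ℝ => gpdf z * (|z + s| ^ p - s ^ p - p * s ^ (p-1) * z))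
  have hsplit : (∫ z, |gpdf z * (|z + s| ^ p - s ^ p - p * s ^ (p-1) * z)|)
      = (∫ z in {z : ℝ | |z| ≤ s/2}, |gpdf z * (|z + s| ^ p - s ^ p - p * s ^ (p-1) * z)|) + ∫ z in {z : ℝ | |z| ≤ s/2}ᶜ, |gpdf z * (|z + s| ^ p - s ^ p - p * s ^ (p-1) * z)| :=
    (integral_add_compl hE (integrable_F hp s).abs).symm
  have hinner := inner_bound hp hs
  have houter := outer_bound hp hs
  -- decay bounds
  have b0 : Real.exp (-(s^2/16)) ≤ 1024 * s^(p-2) := by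
    have := decay' (a := 0) (b := p-2) hs (by linarith)
    rwa [Real.rpow_zero, one_mul] at this
  have b1 : (1+s)^(max p 0) * Real.exp (-(s^2/16)) ≤ 2^(max p 0) * (1024 * s^(p-2)) := by
    have hq2 : (1+s)^(max p 0) ≤ 2^(max p 0) * s^(max p 0) := by
      calc (1+s)^(max p 0) ≤ (2*s)^(max p 0) := Real.rpow_le_rpow (by linarith) (by linarith) hq0
        _ = 2^(max p 0) * s^(max p 0) := Real.mul_rpow (by norm_num) hs0.le
    have hqle : max p 0 - (p-2) ≤ 4 := by
      have : max p 0 ≤ p + 2 := max_le (by linarith) (by linarith)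
      linarith
    have hd := decay' (a := max p 0) (b := p-2) hs hqle
    calc (1+s)^(max p 0) * Real.exp (-(s^2/16)) ≤ (2^(max p 0) * s^(max p 0)) * Real.exp (-(s^2/16)) :=
          mul_le_mul_of_nonneg_right hq2 (Real.exp_pos _).le
      _ = 2^(max p 0) * (s^(max p 0) * Real.exp (-(s^2/16))) := by ring
      _ ≤ 2^(max p 0) * (1024 * s^(p-2)) := mul_le_mul_of_nonneg_left hd (by positivity)
  have b2 : s^p * Real.exp (-(s^2/16)) ≤ 1024 * s^(p-2) := decay' hs (by linarith)
  have b3 : s^(p-1) * Real.exp (-(s^2/16)) ≤ 1024 * s^(p-2) := decay' hs (by linarith)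
  have hob : (Real.sqrt (2*π))⁻¹ * Real.exp (-(s^2/16)) * ((∫ u in Icc (-1:ℝ) 1, |u| ^ p) + (1+s)^(max p 0) * (∫ z : ℝ, Real.exp (-z^2/4) * (1+|z|)^(max p 0)) + s^p * (∫ z : ℝ, Real.exp (-z^2/4)) + |p| * s^(p-1) * (∫ z : ℝ, Real.exp (-z^2/4) * |z|)) ≤ (Real.sqrt (2*π))⁻¹ * 1024 * ((∫ u in Icc (-1:ℝ) 1, |u| ^ p) + 2^(max p 0) * (∫ z : ℝ, Real.exp (-z^2/4) * (1+|z|)^(max p 0)) + (∫ z : ℝ, Real.exp (-z^2/4)) + |p| * (∫ z : ℝ, Real.exp (-z^2/4) * |z|)) * s^(p-2) := by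
    have t0 : (Real.sqrt (2*π))⁻¹ * (∫ u in Icc (-1:ℝ) 1, |u| ^ p) * Real.exp (-(s^2/16)) ≤ (Real.sqrt (2*π))⁻¹ * (∫ u in Icc (-1:ℝ) 1, |u| ^ p) * (1024 * s^(p-2)) :=
      mul_le_mul_of_nonneg_left b0 (mul_nonneg hcst.le hcp)
    have t1 : (Real.sqrt (2*π))⁻¹ * (∫ z : ℝ, Real.exp (-z^2/4) * (1+|z|)^(max p 0)) * ((1+s)^(max p 0) * Real.exp (-(s^2/16))) ≤ (Real.sqrt (2*π))⁻¹ * (∫ z : ℝ, Real.exp (-z^2/4) * (1+|z|)^(max p 0)) * (2^(max p 0) * (1024 * s^(p-2))) :=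
      mul_le_mul_of_nonneg_left b1 (mul_nonneg hcst.le hMq)
    have t2 : (Real.sqrt (2*π))⁻¹ * (∫ z : ℝ, Real.exp (-z^2/4)) * (s^p * Real.exp (-(s^2/16))) ≤ (Real.sqrt (2*π))⁻¹ * (∫ z : ℝ, Real.exp (-z^2/4)) * (1024 * s^(p-2)) :=
      mul_le_mul_of_nonneg_left b2 (mul_nonneg hcst.le hG1)
    have t3 : (Real.sqrt (2*π))⁻¹ * (|p| * (∫ z : ℝ, Real.exp (-z^2/4) * |z|)) * (s^(p-1) * Real.exp (-(s^2/16))) ≤ (Real.sqrt (2*π))⁻¹ * (|p| * (∫ z : ℝ, Real.exp (-z^2/4) * |z|)) * (1024 * s^(p-2)) :=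
      mul_le_mul_of_nonneg_left b3 (mul_nonneg hcst.le (mul_nonneg (abs_nonneg p) hG2))
    calc (Real.sqrt (2*π))⁻¹ * Real.exp (-(s^2/16)) * ((∫ u in Icc (-1:ℝ) 1, |u| ^ p) + (1+s)^(max p 0) * (∫ z : ℝ, Real.exp (-z^2/4) * (1+|z|)^(max p 0)) + s^p * (∫ z : ℝ, Real.exp (-z^2/4)) + |p| * s^(p-1) * (∫ z : ℝ, Real.exp (-z^2/4) * |z|))
        = (Real.sqrt (2*π))⁻¹ * (∫ u in Icc (-1:ℝ) 1, |u| ^ p) * Real.exp (-(s^2/16)) + (Real.sqrt (2*π))⁻¹ * (∫ z : ℝ, Real.exp (-z^2/4) * (1+|z|)^(max p 0)) * ((1+s)^(max p 0) * Real.exp (-(s^2/16)))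
          + (Real.sqrt (2*π))⁻¹ * (∫ z : ℝ, Real.exp (-z^2/4)) * (s^p * Real.exp (-(s^2/16))) + (Real.sqrt (2*π))⁻¹ * (|p| * (∫ z : ℝ, Real.exp (-z^2/4) * |z|)) * (s^(p-1) * Real.exp (-(s^2/16))) := by ring
      _ ≤ (Real.sqrt (2*π))⁻¹ * (∫ u in Icc (-1:ℝ) 1, |u| ^ p) * (1024 * s^(p-2)) + (Real.sqrt (2*π))⁻¹ * (∫ z : ℝ, Real.exp (-z^2/4) * (1+|z|)^(max p 0)) * (2^(max p 0) * (1024 * s^(p-2)))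
          + (Real.sqrt (2*π))⁻¹ * (∫ z : ℝ, Real.exp (-z^2/4)) * (1024 * s^(p-2)) + (Real.sqrt (2*π))⁻¹ * (|p| * (∫ z : ℝ, Real.exp (-z^2/4) * |z|)) * (1024 * s^(p-2)) := by
          exact add_le_add (add_le_add (add_le_add t0 t1) t2) t3
      _ = (Real.sqrt (2*π))⁻¹ * 1024 * ((∫ u in Icc (-1:ℝ) 1, |u| ^ p) + 2^(max p 0) * (∫ z : ℝ, Real.exp (-z^2/4) * (1+|z|)^(max p 0)) + (∫ z : ℝ, Real.exp (-z^2/4)) + |p| * (∫ z : ℝ, Real.exp (-z^2/4) * |z|)) * s^(p-2) := by ring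
  have htot : |lam p s - s ^ p| ≤ ((|p| * |p-1| * ((2:ℝ)^(2-p) + (3/2:ℝ)^(p-2))) * (∫ z : ℝ, gpdf z * z ^ 2) + (Real.sqrt (2*π))⁻¹ * 1024 * ((∫ u in Icc (-1:ℝ) 1, |u| ^ p) + 2^(max p 0) * (∫ z : ℝ, Real.exp (-z^2/4) * (1+|z|)^(max p 0)) + (∫ z : ℝ, Real.exp (-z^2/4)) + |p| * (∫ z : ℝ, Real.exp (-z^2/4) * |z|))) * s^(p-2) := by
    calc |lam p s - s ^ p| ≤ ∫ z, |gpdf z * (|z + s| ^ p - s ^ p - p * s ^ (p-1) * z)| := h1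
      _ = (∫ z in {z : ℝ | |z| ≤ s/2}, |gpdf z * (|z + s| ^ p - s ^ p - p * s ^ (p-1) * z)|) + ∫ z in {z : ℝ | |z| ≤ s/2}ᶜ, |gpdf z * (|z + s| ^ p - s ^ p - p * s ^ (p-1) * z)| := hsplit
      _ ≤ (|p| * |p-1| * ((2:ℝ)^(2-p) + (3/2:ℝ)^(p-2))) * s^(p-2) * (∫ z : ℝ, gpdf z * z ^ 2) + (Real.sqrt (2*π))⁻¹ * Real.exp (-(s^2/16)) * ((∫ u in Icc (-1:ℝ) 1, |u| ^ p) + (1+s)^(max p 0) * (∫ z : ℝ, Real.exp (-z^2/4) * (1+|z|)^(max p 0)) + s^p * (∫ z : ℝ, Real.exp (-z^2/4)) + |p| * s^(p-1) * (∫ z : ℝ, Real.exp (-z^2/4) * |z|)) := add_le_add hinner houter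
      _ ≤ (|p| * |p-1| * ((2:ℝ)^(2-p) + (3/2:ℝ)^(p-2))) * s^(p-2) * (∫ z : ℝ, gpdf z * z ^ 2) + (Real.sqrt (2*π))⁻¹ * 1024 * ((∫ u in Icc (-1:ℝ) 1, |u| ^ p) + 2^(max p 0) * (∫ z : ℝ, Real.exp (-z^2/4) * (1+|z|)^(max p 0)) + (∫ z : ℝ, Real.exp (-z^2/4)) + |p| * (∫ z : ℝ, Real.exp (-z^2/4) * |z|)) * s^(p-2) := by linarith
      _ = ((|p| * |p-1| * ((2:ℝ)^(2-p) + (3/2:ℝ)^(p-2))) * (∫ z : ℝ, gpdf z * z ^ 2) + (Real.sqrt (2*π))⁻¹ * 1024 * ((∫ u in Icc (-1:ℝ) 1, |u| ^ p) + 2^(max p 0) * (∫ z : ℝ, Real.exp (-z^2/4) * (1+|z|)^(max p 0)) + (∫ z : ℝ, Real.exp (-z^2/4)) + |p| * (∫ z : ℝ, Real.exp (-z^2/4) * |z|))) * s^(p-2) := by ring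
  calc |lam p s - s ^ p| ≤ ((|p| * |p-1| * ((2:ℝ)^(2-p) + (3/2:ℝ)^(p-2))) * (∫ z : ℝ, gpdf z * z ^ 2) + (Real.sqrt (2*π))⁻¹ * 1024 * ((∫ u in Icc (-1:ℝ) 1, |u| ^ p) + 2^(max p 0) * (∫ z : ℝ, Real.exp (-z^2/4) * (1+|z|)^(max p 0)) + (∫ z : ℝ, Real.exp (-z^2/4)) + |p| * (∫ z : ℝ, Real.exp (-z^2/4) * |z|))) * s^(p-2) := htot
    _ ≤ ((|p| * |p-1| * ((2:ℝ)^(2-p) + (3/2:ℝ)^(p-2))) * (∫ z : ℝ, gpdf z * z ^ 2) + (Real.sqrt (2*π))⁻¹ * 1024 * ((∫ u in Icc (-1:ℝ) 1, |u| ^ p) + 2^(max p 0) * (∫ z : ℝ, Real.exp (-z^2/4) * (1+|z|)^(max p 0)) + (∫ z : ℝ, Real.exp (-z^2/4)) + |p| * (∫ z : ℝ, Real.exp (-z^2/4) * |z|)) + 1) * s^(p-2) := by nlinarith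

lemma lam_neg (p s : ℝ) : lam p (-s) = lam p s := by
  unfold lam
  rw [integral_gamma, integral_gamma]
  have h := integral_neg_eq_self (fun z : ℝ => gpdf z * |z + -s| ^ p) (volume : Measure ℝ)
  have h2 : ∀ z : ℝ, gpdf (-z) * |(-z) + -s| ^ p = gpdf z * |z + s| ^ p := by
    intro z
    have e1 : gpdf (-z) = gpdf z := by unfold gpdf; ring_nf
    have e2 : |(-z) + -s| = |z + s| := by rw [show (-z) + -s = -(z+s) by ring, abs_neg]
    rw [e1, e2]
  have h3 : (∫ z : ℝ, (fun z : ℝ => gpdf z * |z + -s| ^ p) (-z)) = ∫ z : ℝ, gpdf z * |z + s| ^ p := by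
    simp only [h2]
  exact h.symm.trans h3

/-- For each `p ∈ (-1,∞)` there is `C > 0` with `|λ_p(s) − |s|^p| ≤ C·|s|^{p-2}` whenever
`|s| > 1`. -/
theorem stmt6 (p : ℝ) (hp : -1 < p) :
    ∃ C : ℝ, 0 < C ∧ ∀ s : ℝ, 1 < |s| → |lam p s - |s| ^ p| ≤ C * |s| ^ (p - 2) := by
  obtain ⟨C, hC, hmain⟩ := main_est hp
  refine ⟨C, hC, fun s hs => ?_⟩
  have hlam : lam p |s| = lam p s := by
    rcases abs_choice s with h | h
    · rw [h]
    · rw [h, lam_neg]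
  rw [← hlam]
  exact hmain |s| hs
end
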